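/- arXiv:2411.04846 — 4 statements merged into one kernel-verified Lean document; each statement's English description precedes it below -/
import Mathlib

section
/- For every graph G, the minimum number of operations to turn G into a disjoint union of 2-clubs using only vertex splits is at least the minimum using both edge deletions and vertex splits, and at most twice that quantity; that is, 2ccedvs(G) ≤ 2ccvs(G) ≤ 2·2ccedvs(G). -/
open SimpleGraph

/-- `H` is obtained from `G` by splitting vertex `v` into two copies `v` and `v'`
(where `v'` was an isolated vertex), with `N(v₁) ∪ N(v₂) = N(v)`. -/
def IsSplitAt {V : Type*} (v v' : V) (G H : SimpleGraph V) : Prop :=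
  v ≠ v' ∧ G.neighborSet v' = ∅ ∧ ¬ H.Adj v v' ∧
  (∀ x y : V, x ≠ v → x ≠ v' → y ≠ v → y ≠ v' → (H.Adj x y ↔ G.Adj x y)) ∧
  (∀ x : V, x ≠ v → x ≠ v' → ((H.Adj v x ∨ H.Adj v' x) ↔ G.Adj v x))

/-- `H` is obtained from `G` by a single vertex split. -/
def IsSplit {V : Type*} (G H : SimpleGraph V) : Prop :=
  ∃ v v', IsSplitAt v v' G H

/-- `H` is obtained from `G` by deleting a single (existing) edge. -/
def IsEdgeDeletion {V : Type*} (G H : SimpleGraph V) : Prop :=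
  ∃ u v : V, G.Adj u v ∧ H = G.deleteEdges {s(u, v)}

/-- Editing operations: edge deletion, or vertex split (recording the split vertex
and the name of the new copy). -/
inductive Op where
  | del : ℕ → ℕ → Op
  | split : ℕ → ℕ → Op

/-- Semantics of one operation. -/
def OpApplies : Op → SimpleGraph ℕ → SimpleGraph ℕ → Prop
  | Op.del u v, G, H => G.Adj u v ∧ H = G.deleteEdges {s(u, v)}
  | Op.split v v', G, H => IsSplitAt v v' G H

/-- Applying a list of operations in order. -/
def OpsApply : List Op → SimpleGraph ℕ → SimpleGraph ℕ → Prop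
  | [], G, H => H = G
  | o :: l, G, H => ∃ G', OpApplies o G G' ∧ OpsApply l G' H

def IsSplitOp : Op → Prop
  | Op.split _ _ => True
  | Op.del _ _ => False

/-- The set of vertices on which a split is performed in the list of operations. -/
def splitVerts (l : List Op) : Set ℕ := {v | ∃ v', Op.split v v' ∈ l}

/-- `G` is a disjoint union of 2-clubs: within each connected component all
distances are at most 2. -/
def Is2ClubGraph (G : SimpleGraph ℕ) : Prop :=
  ∀ u v : ℕ, G.Reachable u v → G.dist u v ≤ 2

/-- Minimum number of vertex splits turning `G` into a disjoint union of 2-clubs. -/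
noncomputable def twoCcvs (G : SimpleGraph ℕ) : ℕ :=
  sInf {k | ∃ l H, l.length = k ∧ (∀ o ∈ l, IsSplitOp o) ∧ OpsApply l G H ∧ Is2ClubGraph H}

/-- Minimum number of edge deletions and vertex splits turning `G` into a
disjoint union of 2-clubs. -/
noncomputable def twoCcedvs (G : SimpleGraph ℕ) : ℕ :=
  sInf {k | ∃ l H, l.length = k ∧ OpsApply l G H ∧ Is2ClubGraph H}

/-- The subgraph of `G` induced on `s` (kept on the same vertex type, all
vertices outside `s` becoming isolated). -/
def inducedOn (G : SimpleGraph ℕ) (s : Set ℕ) : SimpleGraph ℕ where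
  Adj x y := G.Adj x y ∧ x ∈ s ∧ y ∈ s
  symm := ⟨fun x y h => ⟨h.1.symm, h.2.2, h.2.1⟩⟩
  loopless := ⟨fun x h => G.loopless.irrefl x h.1⟩

/-- The set `s` induces a 2-club in `G` (connected, diameter at most 2). -/
def Inducing2Club (G : SimpleGraph ℕ) (s : Set ℕ) : Prop :=
  ∀ u ∈ s, ∀ v ∈ s, (inducedOn G s).Reachable u v ∧ (inducedOn G s).dist u v ≤ 2

/-- The path with vertices `0, 1, …, m` (length `m`). -/
def pathG (m : ℕ) : SimpleGraph ℕ :=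
  SimpleGraph.fromRel (fun i j => j = i + 1 ∧ j ≤ m)

/-- The cycle with vertices `0, 1, …, n-1`. -/
def cycleG (n : ℕ) : SimpleGraph ℕ :=
  SimpleGraph.fromRel (fun i j => i < n ∧ j = (i + 1) % n)


section Aux

/-- `G` plus a single extra edge `ab` (intended: `a`, `b` fresh isolated vertices). -/
def addK2 (a b : ℕ) (G : SimpleGraph ℕ) : SimpleGraph ℕ where
  Adj x y := G.Adj x y ∨ (a ≠ b ∧ (x = a ∧ y = b ∨ x = b ∧ y = a))
  symm := ⟨by intro x y h; tauto⟩
  loopless := by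
    constructor
    intro x h
    rcases h with h | ⟨hab, ⟨rfl, rfl⟩ | ⟨rfl, rfl⟩⟩
    · exact G.loopless.irrefl x h
    · exact hab rfl
    · exact hab rfl

lemma addK2_adj {a b : ℕ} {G : SimpleGraph ℕ} {x y : ℕ} :
    (addK2 a b G).Adj x y ↔ (G.Adj x y ∨ (a ≠ b ∧ (x = a ∧ y = b ∨ x = b ∧ y = a))) :=
  Iff.rfl

/-- Graph obtained from `G` by removing the edge `uv` and adding an edge `av`. -/
def moveTo (G : SimpleGraph ℕ) (u v a : ℕ) : SimpleGraph ℕ where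
  Adj x y := (G.Adj x y ∧ s(x, y) ≠ s(u, v)) ∨ (a ≠ v ∧ (x = a ∧ y = v ∨ x = v ∧ y = a))
  symm := by
    constructor
    intro x y h
    rcases h with ⟨h1, h2⟩ | ⟨hav, h⟩
    · exact Or.inl ⟨h1.symm, by rwa [Sym2.eq_swap]⟩
    · exact Or.inr ⟨hav, by tauto⟩
  loopless := by
    constructor
    intro x h
    rcases h with ⟨h1, _⟩ | ⟨hav, ⟨rfl, rfl⟩ | ⟨rfl, rfl⟩⟩
    · exact G.loopless.irrefl x h1
    · exact hav rfl
    · exact hav rfl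

lemma moveTo_adj {G : SimpleGraph ℕ} {u v a x y : ℕ} :
    (moveTo G u v a).Adj x y ↔
      ((G.Adj x y ∧ s(x, y) ≠ s(u, v)) ∨ (a ≠ v ∧ (x = a ∧ y = v ∨ x = v ∧ y = a))) :=
  Iff.rfl

lemma isolated_iff {G : SimpleGraph ℕ} {a : ℕ} :
    G.neighborSet a = ∅ ↔ ∀ y, ¬ G.Adj a y := by
  simp only [Set.eq_empty_iff_forall_notMem, mem_neighborSet]

/-- Splitting off from `u` the single neighbor `v`, onto the fresh vertex `a`. -/
lemma isSplitAt_moveTo {G : SimpleGraph ℕ} {u v a : ℕ} (huv : G.Adj u v)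
    (hau : a ≠ u) (hav : a ≠ v) (ha : ∀ y, ¬ G.Adj a y) :
    IsSplitAt u a G (moveTo G u v a) := by
  have hune : u ≠ v := huv.ne
  refine ⟨hau.symm, isolated_iff.mpr ha, ?_, ?_, ?_⟩
  · rw [moveTo_adj]
    rintro (⟨h1, _⟩ | ⟨_, ⟨h2, _⟩ | ⟨h2, _⟩⟩)
    · exact ha u h1.symm
    · exact hau h2.symm
    · exact hune h2
  · intro x y hxu hxa hyu hya
    rw [moveTo_adj]
    constructor
    · rintro (⟨h1, _⟩ | ⟨_, ⟨rfl, rfl⟩ | ⟨rfl, rfl⟩⟩)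
      · exact h1
      · exact absurd rfl hxa
      · exact absurd rfl hya
    · intro h
      refine Or.inl ⟨h, ?_⟩
      rw [ne_eq, Sym2.eq_iff]
      rintro (⟨rfl, rfl⟩ | ⟨rfl, rfl⟩)
      · exact hxu rfl
      · exact hyu rfl
  · intro x hxu hxa
    rw [moveTo_adj, moveTo_adj]
    constructor
    · rintro ((⟨h1, _⟩ | ⟨_, ⟨rfl, rfl⟩ | ⟨rfl, _⟩⟩) | (⟨h1, _⟩ | ⟨_, ⟨_, rfl⟩ | ⟨rfl, rfl⟩⟩))
      · exact h1
      · exact absurd rfl hau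
      · exact absurd rfl hune
      · exact absurd h1 (ha x)
      · exact huv
      · exact absurd rfl hxa
    · intro h
      by_cases hxv : x = v
      · subst hxv
        exact Or.inr (Or.inr ⟨hav, Or.inl ⟨rfl, rfl⟩⟩)
      · refine Or.inl (Or.inl ⟨h, ?_⟩)
        rw [ne_eq, Sym2.eq_iff]
        rintro (⟨_, rfl⟩ | ⟨rfl, _⟩)
        · exact hxv rfl
        · exact hune rfl

def touches (x : ℕ) : Op → Prop
  | Op.del u v => x = u ∨ x = v
  | Op.split v v' => x = v ∨ x = v'

lemma split_isolated {G H : SimpleGraph ℕ} {v v' a : ℕ} (h : IsSplitAt v v' G H)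
    (hav : a ≠ v) (hav' : a ≠ v') (ha : ∀ y, ¬ G.Adj a y) : ∀ y, ¬ H.Adj a y := by
  obtain ⟨-, -, -, h4, h5⟩ := h
  intro y hy
  by_cases hyv : y = v
  · rw [hyv] at hy
    exact ha v ((h5 a hav hav').mp (Or.inl hy.symm)).symm
  · by_cases hyv' : y = v'
    · rw [hyv'] at hy
      exact ha v ((h5 a hav hav').mp (Or.inr hy.symm)).symm
    · exact ha y ((h4 a y hav hav' hyv hyv').mp hy)

lemma isSplitAt_addK2 {G H : SimpleGraph ℕ} {v v' a b : ℕ} (h : IsSplitAt v v' G H)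
    (hva : v ≠ a) (hvb : v ≠ b) (hv'a : v' ≠ a) (hv'b : v' ≠ b)
    (ha : ∀ y, ¬ G.Adj a y) (hb : ∀ y, ¬ G.Adj b y) :
    IsSplitAt v v' (addK2 a b G) (addK2 a b H) := by
  obtain ⟨h1, h2, h3, h4, h5⟩ := h
  have h2' : ∀ y, ¬ G.Adj v' y := isolated_iff.mp h2
  refine ⟨h1, ?_, ?_, ?_, ?_⟩
  · rw [isolated_iff]
    intro y
    rw [addK2_adj]
    rintro (hy | ⟨_, ⟨h, _⟩ | ⟨h, _⟩⟩)
    · exact h2' y hy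
    · exact hv'a h
    · exact hv'b h
  · rw [addK2_adj]
    rintro (hy | ⟨_, ⟨h, _⟩ | ⟨h, _⟩⟩)
    · exact h3 hy
    · exact hva h
    · exact hvb h
  · intro x y hxv hxv' hyv hyv'
    rw [addK2_adj, addK2_adj, h4 x y hxv hxv' hyv hyv']
  · intro x hxv hxv'
    rw [addK2_adj, addK2_adj, addK2_adj]
    have e1 : ¬ (a ≠ b ∧ (v = a ∧ x = b ∨ v = b ∧ x = a)) := by
      rintro ⟨_, ⟨h, _⟩ | ⟨h, _⟩⟩
      · exact hva h
      · exact hvb h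
    have e2 : ¬ (a ≠ b ∧ (v' = a ∧ x = b ∨ v' = b ∧ x = a)) := by
      rintro ⟨_, ⟨h, _⟩ | ⟨h, _⟩⟩
      · exact hv'a h
      · exact hv'b h
    have h5' := h5 x hxv hxv'
    constructor
    · rintro ((h | hk) | (h | hk))
      · exact Or.inl (h5'.mp (Or.inl h))
      · exact absurd hk e1
      · exact Or.inl (h5'.mp (Or.inr h))
      · exact absurd hk e2
    · rintro (h | hk)
      · rcases h5'.mpr h with h | h
        · exact Or.inl (Or.inl h)
        · exact Or.inr (Or.inl h)
      · exact Or.inl (Or.inr hk)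

lemma deleteEdges_addK2 {G : SimpleGraph ℕ} {u v a b : ℕ}
    (hau : a ≠ u) (hav : a ≠ v) (hbu : b ≠ u) (hbv : b ≠ v) :
    (addK2 a b G).deleteEdges {s(u, v)} = addK2 a b (G.deleteEdges {s(u, v)}) := by
  ext x y
  rw [deleteEdges_adj, addK2_adj, addK2_adj, deleteEdges_adj]
  have : (a ≠ b ∧ (x = a ∧ y = b ∨ x = b ∧ y = a)) → ¬ s(x, y) ∈ ({s(u, v)} : Set (Sym2 ℕ)) := by
    rintro ⟨_, ⟨rfl, rfl⟩ | ⟨rfl, rfl⟩⟩ hmem <;>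
      · rw [Set.mem_singleton_iff, Sym2.eq_iff] at hmem
        rcases hmem with ⟨h1, h2⟩ | ⟨h1, h2⟩ <;> first
          | exact hau h1 | exact hav h1 | exact hbu h1 | exact hbv h1
  constructor
  · rintro ⟨h | hk, hm⟩
    · exact Or.inl ⟨h, hm⟩
    · exact Or.inr hk
  · rintro (⟨h, hm⟩ | hk)
    · exact ⟨Or.inl h, hm⟩
    · exact ⟨Or.inr hk, this hk⟩

lemma support_subset_of_split {G H : SimpleGraph ℕ} {v v' : ℕ} (h : IsSplitAt v v' G H) :
    H.support ⊆ G.support ∪ {v, v'} := by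
  obtain ⟨-, -, -, h4, h5⟩ := h
  intro x hx
  by_cases hxv : x = v
  · exact Or.inr (by simp [hxv])
  by_cases hxv' : x = v'
  · exact Or.inr (by simp [hxv'])
  obtain ⟨y, hy⟩ := hx
  left
  by_cases hyv : y = v
  · subst hyv
    exact ⟨y, ((h5 x hxv hxv').mp (Or.inl hy.symm)).symm⟩
  by_cases hyv' : y = v'
  · subst hyv'
    exact ⟨v, ((h5 x hxv hxv').mp (Or.inr hy.symm)).symm⟩
  · exact ⟨y, (h4 x y hxv hxv' hyv hyv').mp hy⟩

lemma support_addK2 {G : SimpleGraph ℕ} {a b : ℕ} :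
    (addK2 a b G).support ⊆ G.support ∪ {a, b} := by
  rintro x ⟨y, hy | ⟨_, ⟨rfl, _⟩ | ⟨rfl, _⟩⟩⟩
  · exact Or.inl ⟨y, hy⟩
  · exact Or.inr (by simp)
  · exact Or.inr (by simp)

lemma support_deleteEdges {G : SimpleGraph ℕ} {s : Set (Sym2 ℕ)} :
    (G.deleteEdges s).support ⊆ G.support := by
  rintro x ⟨y, hy⟩
  exact ⟨y, (deleteEdges_adj.mp hy).1⟩

lemma opsApply_append {l1 l2 : List Op} : ∀ {G H K : SimpleGraph ℕ},
    OpsApply l1 G K → OpsApply l2 K H → OpsApply (l1 ++ l2) G H := by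
  induction l1 with
  | nil => intro G H K h1 h2; rw [h1] at h2; exact h2
  | cons o l ih =>
      rintro G H K ⟨G', ho, hl⟩ h2
      exact ⟨G', ho, ih hl h2⟩

lemma opsApply_addK2 : ∀ (l : List Op) (G H : SimpleGraph ℕ) (a b : ℕ), a ≠ b →
    OpsApply l G H → (∀ o ∈ l, ¬ touches a o ∧ ¬ touches b o) →
    (∀ y, ¬ G.Adj a y) → (∀ y, ¬ G.Adj b y) →
    OpsApply l (addK2 a b G) (addK2 a b H) ∧ (∀ y, ¬ H.Adj a y) ∧ (∀ y, ¬ H.Adj b y) := by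
  intro l
  induction l with
  | nil =>
      intro G H a b hab happ _ ha hb
      rw [show H = G from happ]
      exact ⟨rfl, ha, hb⟩
  | cons o l ih =>
      rintro G H a b hab ⟨G', ho, hl⟩ htouch ha hb
      obtain ⟨hta, htb⟩ := htouch o List.mem_cons_self
      have htl := fun o' ho' => htouch o' (List.mem_cons_of_mem o ho')
      match o with
      | Op.del u v =>
          obtain ⟨huv, rfl⟩ := ho
          have hau : a ≠ u := fun h => hta (Or.inl h)
          have hav : a ≠ v := fun h => hta (Or.inr h)
          have hbu : b ≠ u := fun h => htb (Or.inl h)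
          have hbv : b ≠ v := fun h => htb (Or.inr h)
          have ha' : ∀ y, ¬ (G.deleteEdges {s(u,v)}).Adj a y :=
            fun y hy => ha y (deleteEdges_adj.mp hy).1
          have hb' : ∀ y, ¬ (G.deleteEdges {s(u,v)}).Adj b y :=
            fun y hy => hb y (deleteEdges_adj.mp hy).1
          obtain ⟨happ', hHa, hHb⟩ := ih _ H a b hab hl htl ha' hb'
          refine ⟨⟨addK2 a b (G.deleteEdges {s(u,v)}), ⟨Or.inl huv, (deleteEdges_addK2 hau hav hbu hbv).symm⟩, happ'⟩, hHa, hHb⟩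
      | Op.split v v' =>
          have hva : v ≠ a := fun h => hta (Or.inl h.symm)
          have hv'a : v' ≠ a := fun h => hta (Or.inr h.symm)
          have hvb : v ≠ b := fun h => htb (Or.inl h.symm)
          have hv'b : v' ≠ b := fun h => htb (Or.inr h.symm)
          have ha' := split_isolated ho hva.symm hv'a.symm ha
          have hb' := split_isolated ho hvb.symm hv'b.symm hb
          obtain ⟨happ', hHa, hHb⟩ := ih _ H a b hab hl htl ha' hb'
          exact ⟨⟨addK2 a b G', isSplitAt_addK2 ho hva hvb hv'a hv'b ha hb, happ'⟩, hHa, hHb⟩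


lemma sim_del {G : SimpleGraph ℕ} {u v a b : ℕ} (huv : G.Adj u v)
    (ha : ∀ y, ¬ G.Adj a y) (hb : ∀ y, ¬ G.Adj b y)
    (hau : a ≠ u) (hav : a ≠ v) (hbu : b ≠ u) (hbv : b ≠ v) (hab : a ≠ b) :
    OpsApply [Op.split u a, Op.split v b] G (addK2 a b (G.deleteEdges {s(u, v)})) := by
  set G1 := moveTo G u v a with hG1
  have s1 : IsSplitAt u a G G1 := isSplitAt_moveTo huv hau hav ha
  have hG1va : G1.Adj v a := Or.inr ⟨hav, Or.inr ⟨rfl, rfl⟩⟩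
  have hb1 : ∀ y, ¬ G1.Adj b y := by
    rintro y (⟨h, _⟩ | ⟨_, ⟨h2, _⟩ | ⟨h2, _⟩⟩)
    · exact hb y h
    · exact hab.symm h2
    · exact hbv h2
  have s2 : IsSplitAt v b G1 (moveTo G1 v a b) := isSplitAt_moveTo hG1va hbv hab.symm hb1
  have heq : moveTo G1 v a b = addK2 a b (G.deleteEdges {s(u, v)}) := by
    ext x y
    rw [moveTo_adj, addK2_adj, deleteEdges_adj]
    constructor
    · rintro (⟨hG1xy, hne⟩ | ⟨_, ⟨rfl, rfl⟩ | ⟨rfl, rfl⟩⟩)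
      · rcases hG1xy with ⟨h, hne2⟩ | ⟨_, ⟨rfl, rfl⟩ | ⟨rfl, rfl⟩⟩
        · exact Or.inl ⟨h, by simpa using hne2⟩
        · exact absurd Sym2.eq_swap hne
        · exact absurd rfl hne
      · exact Or.inr ⟨hab, Or.inr ⟨rfl, rfl⟩⟩
      · exact Or.inr ⟨hab, Or.inl ⟨rfl, rfl⟩⟩
    · rintro (⟨h, hm⟩ | ⟨_, ⟨rfl, rfl⟩ | ⟨rfl, rfl⟩⟩)
      · refine Or.inl ⟨Or.inl ⟨h, by simpa using hm⟩, ?_⟩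
        rw [ne_eq, Sym2.eq_iff]
        rintro (⟨rfl, rfl⟩ | ⟨rfl, rfl⟩)
        · exact ha x h.symm
        · exact ha y h
      · exact Or.inr ⟨hab.symm, Or.inr ⟨rfl, rfl⟩⟩
      · exact Or.inr ⟨hab.symm, Or.inl ⟨rfl, rfl⟩⟩
  exact ⟨G1, s1, moveTo G1 v a b, s2, heq.symm⟩

lemma walk_out {H : SimpleGraph ℕ} {a b : ℕ}
    (ha : ∀ y, ¬ H.Adj a y) (hb : ∀ y, ¬ H.Adj b y) :
    ∀ {x y : ℕ}, (addK2 a b H).Walk x y →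
      (x ≠ a → x ≠ b → y ≠ a ∧ y ≠ b ∧ H.Reachable x y) := by
  intro x y p
  induction p with
  | nil => exact fun h1 h2 => ⟨h1, h2, Reachable.refl _⟩
  | @cons x m y h p ih =>
      intro hxa hxb
      rcases h with h | ⟨_, ⟨h1, _⟩ | ⟨h1, _⟩⟩
      · have hma : m ≠ a := fun e => ha x (by rw [e] at h; exact h.symm)
        have hmb : m ≠ b := fun e => hb x (by rw [e] at h; exact h.symm)
        obtain ⟨hya, hyb, hr⟩ := ih hma hmb
        exact ⟨hya, hyb, Reachable.trans h.reachable hr⟩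
      · exact absurd h1 hxa
      · exact absurd h1 hxb

lemma is2Club_addK2 {H : SimpleGraph ℕ} {a b : ℕ} (hab : a ≠ b)
    (ha : ∀ y, ¬ H.Adj a y) (hb : ∀ y, ¬ H.Adj b y) (h2 : Is2ClubGraph H) :
    Is2ClubGraph (addK2 a b H) := by
  have hle : H ≤ addK2 a b H := fun x y h => Or.inl h
  intro u v hr
  by_cases hua : u = a ∨ u = b
  · by_cases hva : v = a ∨ v = b
    · by_cases huv : u = v
      · rw [huv, dist_self]; omega
      · have hadj : (addK2 a b H).Adj u v := by
          rcases hua with rfl | rfl <;> rcases hva with rfl | rfl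
          · exact absurd rfl huv
          · exact Or.inr ⟨hab, Or.inl ⟨rfl, rfl⟩⟩
          · exact Or.inr ⟨hab, Or.inr ⟨rfl, rfl⟩⟩
          · exact absurd rfl huv
        have hd := dist_le (Walk.cons hadj Walk.nil)
        simp only [Walk.length_cons, Walk.length_nil] at hd
        omega
    · push_neg at hva
      obtain ⟨p⟩ := hr.symm
      obtain ⟨h1, h2', -⟩ := walk_out ha hb p hva.1 hva.2
      rcases hua with rfl | rfl
      · exact absurd rfl h1
      · exact absurd rfl h2'
  · push_neg at hua
    obtain ⟨p⟩ := hr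
    obtain ⟨hva, hvb, hrH⟩ := walk_out ha hb p hua.1 hua.2
    obtain ⟨q, hq⟩ := hrH.exists_walk_length_eq_dist
    have hd := dist_le (q.mapLe hle)
    rw [Walk.length_map] at hd
    exact hd.trans (le_of_eq hq |>.trans (h2 u v hrH))


lemma edgeSet_finite_of_support {G : SimpleGraph ℕ} (hfin : G.support.Finite) :
    G.edgeSet.Finite := by
  apply Set.Finite.subset ((hfin.prod hfin).image (fun p => s(p.1, p.2)))
  intro e he
  obtain ⟨⟨x, y⟩, rfl⟩ := Quot.exists_rep e
  have hxy : G.Adj x y := (G.mem_edgeSet).mp he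
  exact ⟨(x, y), ⟨⟨y, hxy⟩, ⟨x, hxy.symm⟩⟩, rfl⟩

lemma is2Club_of_edgeSet_empty {G : SimpleGraph ℕ} (h : G.edgeSet = ∅) :
    Is2ClubGraph G := by
  have hbot : G = ⊥ := edgeSet_eq_empty.mp h
  intro u v hr
  rw [hbot] at hr ⊢
  obtain rfl := reachable_bot.mp hr
  rw [dist_self]
  omega

lemma delall : ∀ (n : ℕ) (G : SimpleGraph ℕ) (h : G.edgeSet.Finite),
    h.toFinset.card ≤ n → ∃ l H, OpsApply l G H ∧ Is2ClubGraph H := by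
  intro n
  induction n with
  | zero =>
      intro G h hc
      have hemp : G.edgeSet = ∅ := by
        rw [← h.toFinset_eq_empty, Finset.eq_empty_iff_forall_notMem]
        intro x hx
        have := Finset.card_pos.mpr ⟨x, hx⟩
        omega
      exact ⟨[], G, rfl, is2Club_of_edgeSet_empty hemp⟩
  | succ n ih =>
      intro G h hc
      by_cases hemp : G.edgeSet = ∅
      · exact ⟨[], G, rfl, is2Club_of_edgeSet_empty hemp⟩
      · obtain ⟨e, he⟩ := Set.nonempty_iff_ne_empty.mpr hemp
        obtain ⟨⟨u, v⟩, rfl⟩ := Quot.exists_rep e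
        have huv : G.Adj u v := (G.mem_edgeSet).mp he
        have h' : (G.deleteEdges {s(u, v)}).edgeSet.Finite := by
          rw [edgeSet_deleteEdges]
          exact h.diff
        have hcard : h'.toFinset.card ≤ n := by
          have hsub : h'.toFinset ⊆ h.toFinset.erase s(u, v) := by
            intro x hx
            rw [Set.Finite.mem_toFinset, edgeSet_deleteEdges] at hx
            exact Finset.mem_erase.mpr ⟨by simpa using hx.2, h.mem_toFinset.mpr hx.1⟩
          have hle := Finset.card_le_card hsub
          rw [Finset.card_erase_of_mem (h.mem_toFinset.mpr he)] at hle
          omega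
        obtain ⟨l, H, happ, hclub⟩ := ih (G.deleteEdges {s(u, v)}) h' hcard
        exact ⟨Op.del u v :: l, H, ⟨G.deleteEdges {s(u, v)}, ⟨huv, rfl⟩, happ⟩, hclub⟩

lemma touches_finite (l : List Op) : {x | ∃ o ∈ l, touches x o}.Finite := by
  induction l with
  | nil =>
      refine Set.Finite.subset Set.finite_empty ?_
      rintro x ⟨o, ho, -⟩
      simp at ho
  | cons o l ih =>
      have hsub : {x | ∃ o' ∈ o :: l, touches x o'} ⊆
          {x | touches x o} ∪ {x | ∃ o' ∈ l, touches x o'} := by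
        rintro x ⟨o', ho', ht⟩
        rcases List.mem_cons.mp ho' with rfl | ho'
        · exact Or.inl ht
        · exact Or.inr ⟨o', ho', ht⟩
      refine Set.Finite.subset (Set.Finite.union ?_ ih) hsub
      match o with
      | Op.del u v =>
          refine Set.Finite.subset ((Set.finite_singleton v).insert u) ?_
          rintro x (rfl | rfl) <;> simp
      | Op.split u v =>
          refine Set.Finite.subset ((Set.finite_singleton v).insert u) ?_
          rintro x (rfl | rfl) <;> simp

lemma main_sim : ∀ (l : List Op) (G H : SimpleGraph ℕ), OpsApply l G H →
    G.support.Finite → Is2ClubGraph H →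
    ∃ l' H', l'.length ≤ 2 * l.length ∧ (∀ o ∈ l', IsSplitOp o) ∧
      OpsApply l' G H' ∧ Is2ClubGraph H' := by
  intro l
  induction l with
  | nil =>
      intro G H happ hfin hcl
      exact ⟨[], H, by simp, by simp, happ, hcl⟩
  | cons o l ih =>
      rintro G H ⟨G', ho, hl⟩ hfin hcl
      match o with
      | Op.split v v' =>
          have hfin' : G'.support.Finite :=
            Set.Finite.subset (hfin.union ((Set.finite_singleton v').insert v)) (support_subset_of_split ho)
          obtain ⟨l', H', hlen, hso, happ', hcl'⟩ := ih G' H hl hfin' hcl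
          refine ⟨Op.split v v' :: l', H', ?_, ?_, ⟨G', ho, happ'⟩, hcl'⟩
          · simp only [List.length_cons]; omega
          · rintro o' ho'
            rcases List.mem_cons.mp ho' with rfl | ho'
            · trivial
            · exact hso o' ho'
      | Op.del u v =>
          obtain ⟨huv, rfl⟩ := ho
          have hSfin : (G.support ∪ {x | ∃ o ∈ l, touches x o} ∪ {u, v}).Finite :=
            (hfin.union (touches_finite l)).union ((Set.finite_singleton v).insert u)
          obtain ⟨a, haS⟩ := hSfin.infinite_compl.nonempty
          obtain ⟨b, hbS'⟩ := (hSfin.insert a).infinite_compl.nonempty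
          have haS : a ∉ G.support ∪ {x | ∃ o ∈ l, touches x o} ∪ {u, v} := haS
          have hbS : b ∉ G.support ∪ {x | ∃ o ∈ l, touches x o} ∪ {u, v} :=
            fun h => hbS' (Set.mem_insert_iff.mpr (Or.inr h))
          have hab : a ≠ b := fun e => hbS' (Set.mem_insert_iff.mpr (Or.inl e.symm))
          have ha : ∀ y, ¬ G.Adj a y := fun y hy => haS (Or.inl (Or.inl ⟨y, hy⟩))
          have hb : ∀ y, ¬ G.Adj b y := fun y hy => hbS (Or.inl (Or.inl ⟨y, hy⟩))
          have htouch : ∀ o' ∈ l, ¬ touches a o' ∧ ¬ touches b o' := fun o' ho' =>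
            ⟨fun ht => haS (Or.inl (Or.inr ⟨o', ho', ht⟩)),
             fun ht => hbS (Or.inl (Or.inr ⟨o', ho', ht⟩))⟩
          have hau : a ≠ u := fun e => haS (Or.inr (by simp [e]))
          have hav : a ≠ v := fun e => haS (Or.inr (by simp [e]))
          have hbu : b ≠ u := fun e => hbS (Or.inr (by simp [e]))
          have hbv : b ≠ v := fun e => hbS (Or.inr (by simp [e]))
          have ha' : ∀ y, ¬ (G.deleteEdges {s(u, v)}).Adj a y :=
            fun y hy => ha y (deleteEdges_adj.mp hy).1
          have hb' : ∀ y, ¬ (G.deleteEdges {s(u, v)}).Adj b y :=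
            fun y hy => hb y (deleteEdges_adj.mp hy).1
          obtain ⟨happK, hHa, hHb⟩ := opsApply_addK2 l (G.deleteEdges {s(u, v)}) H a b hab hl htouch ha' hb'
          have hclK : Is2ClubGraph (addK2 a b H) := is2Club_addK2 hab hHa hHb hcl
          have hfinK : (addK2 a b (G.deleteEdges {s(u, v)})).support.Finite := by
            refine Set.Finite.subset (hfin.union ((Set.finite_singleton b).insert a)) ?_
            exact subset_trans support_addK2
              (Set.union_subset_union_left _ support_deleteEdges)
          obtain ⟨l'', H'', hlen'', hso'', happ'', hcl''⟩ :=
            ih (addK2 a b (G.deleteEdges {s(u, v)})) (addK2 a b H) happK hfinK hclK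
          have hsim : OpsApply [Op.split u a, Op.split v b] G
              (addK2 a b (G.deleteEdges {s(u, v)})) :=
            sim_del huv ha hb hau hav hbu hbv hab
          refine ⟨Op.split u a :: Op.split v b :: l'', H'', ?_, ?_, ?_, hcl''⟩
          · simp only [List.length_cons]; omega
          · rintro o' ho'
            rcases List.mem_cons.mp ho' with rfl | ho'
            · trivial
            rcases List.mem_cons.mp ho' with rfl | ho'
            · trivial
            · exact hso'' o' ho'
          · exact opsApply_append hsim happ''


end Aux

theorem stmt0 (G : SimpleGraph ℕ) (hfin : G.support.Finite) :
    twoCcedvs G ≤ twoCcvs G ∧ twoCcvs G ≤ 2 * twoCcedvs G := by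
  have hfinE : G.edgeSet.Finite := edgeSet_finite_of_support hfin
  obtain ⟨l0, H0, happ0, hcl0⟩ := delall hfinE.toFinset.card G hfinE le_rfl
  obtain ⟨l1, H1, hlen1, hso1, happ1, hcl1⟩ := main_sim l0 G H0 happ0 hfin hcl0
  have hVs_ne : {k | ∃ l H, l.length = k ∧ (∀ o ∈ l, IsSplitOp o) ∧ OpsApply l G H ∧
      Is2ClubGraph H}.Nonempty := ⟨l1.length, l1, H1, rfl, hso1, happ1, hcl1⟩
  have hEd_ne : {k | ∃ l H, l.length = k ∧ OpsApply l G H ∧ Is2ClubGraph H}.Nonempty :=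
    ⟨l0.length, l0, H0, rfl, happ0, hcl0⟩
  constructor
  · obtain ⟨l, H, hlen, hso, happ, hcl⟩ := Nat.sInf_mem hVs_ne
    exact Nat.sInf_le ⟨l, H, hlen, happ, hcl⟩
  · obtain ⟨l, H, hlen, happ, hcl⟩ := Nat.sInf_mem hEd_ne
    obtain ⟨l', H', hlen', hso', happ', hcl'⟩ := main_sim l G H happ hfin hcl
    have h1 : twoCcvs G ≤ l'.length := Nat.sInf_le ⟨l', H', rfl, hso', happ', hcl'⟩
    have h2 : l.length = twoCcedvs G := hlen
    calc twoCcvs G ≤ l'.length := h1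
      _ ≤ 2 * l.length := hlen'
      _ = 2 * twoCcedvs G := by rw [h2]
end

section
/- Any edge deletion of an edge uv in a graph G can be simulated by two vertex splits: splitting u so that one copy has neighborhood {v}, then splitting v so that one copy has neighborhood equal to the copy of u; the resulting graph restricted to non-degenerate components has the same 2-club components as after deleting uv, plus an isolated edge component which is itself a 2-club. -/
open SimpleGraph

theorem stmt1 (G : SimpleGraph ℕ) (u v u' v' : ℕ) (huv : G.Adj u v)
    (hu' : u' ∉ G.support) (hv' : v' ∉ G.support) (hne : u' ≠ v') :
    ∃ H1 H2 : SimpleGraph ℕ,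
      IsSplitAt u u' G H1 ∧ IsSplitAt v v' H1 H2 ∧
      H1.neighborSet u' = {v} ∧ H2.neighborSet v' = {u'} ∧
      (∀ x y : ℕ, H2.Adj x y ↔
        ((G.deleteEdges {s(u, v)}).Adj x y ∨ (x = u' ∧ y = v') ∨ (x = v' ∧ y = u'))) ∧
      Is2ClubGraph (inducedOn H2 {u', v'}) := by
  classical
  have hune : u ≠ v := huv.ne
  have husup : u ∈ G.support := ⟨v, huv⟩
  have hvsup : v ∈ G.support := ⟨u, huv.symm⟩
  have hGu' : ∀ x, ¬ G.Adj u' x := fun x h => hu' ⟨x, h⟩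
  have hGv' : ∀ x, ¬ G.Adj v' x := fun x h => hv' ⟨x, h⟩
  have huu' : u ≠ u' := fun h => hu' (h ▸ husup)
  have huv' : u ≠ v' := fun h => hv' (h ▸ husup)
  have hvu' : v ≠ u' := fun h => hu' (h ▸ hvsup)
  have hvv' : v ≠ v' := fun h => hv' (h ▸ hvsup)
  set G' := G.deleteEdges {s(u, v)} with hG'
  have hG'adj : ∀ x y, G'.Adj x y ↔ G.Adj x y ∧ ¬((x = u ∧ y = v) ∨ (x = v ∧ y = u)) := by
    intro x y
    simp [hG', SimpleGraph.deleteEdges_adj, Sym2.eq_iff]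
  have hG'u' : ∀ x, ¬ G'.Adj u' x := fun x h => hGu' x ((hG'adj _ _).1 h).1
  have hG'v' : ∀ x, ¬ G'.Adj v' x := fun x h => hGv' x ((hG'adj _ _).1 h).1
  refine ⟨⟨fun x y => G'.Adj x y ∨ (x = u' ∧ y = v) ∨ (x = v ∧ y = u'), ?_, ?_⟩,
    ⟨fun x y => G'.Adj x y ∨ (x = u' ∧ y = v') ∨ (x = v' ∧ y = u'), ?_, ?_⟩, ?_, ?_, ?_, ?_, ?_, ?_⟩
  · constructor
    intro x y h
    rcases h with h | ⟨rfl, rfl⟩ | ⟨rfl, rfl⟩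
    · exact Or.inl h.symm
    · exact Or.inr (Or.inr ⟨rfl, rfl⟩)
    · exact Or.inr (Or.inl ⟨rfl, rfl⟩)
  · constructor
    intro x h
    rcases h with h | ⟨h1, h2⟩ | ⟨h1, h2⟩
    · exact G'.loopless.irrefl x h
    · omega
    · omega
  · constructor
    intro x y h
    rcases h with h | ⟨rfl, rfl⟩ | ⟨rfl, rfl⟩
    · exact Or.inl h.symm
    · exact Or.inr (Or.inr ⟨rfl, rfl⟩)
    · exact Or.inr (Or.inl ⟨rfl, rfl⟩)
  · constructor
    intro x h
    rcases h with h | ⟨h1, h2⟩ | ⟨h1, h2⟩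
    · exact G'.loopless.irrefl x h
    · omega
    · omega
  -- IsSplitAt u u' G H1
  · refine ⟨huu', ?_, ?_, ?_, ?_⟩
    · ext x; simp [SimpleGraph.mem_neighborSet, hGu' x]
    · rintro (h | ⟨h1, h2⟩ | ⟨h1, h2⟩)
      · exact hG'u' u h.symm
      · omega
      · omega
    · intro x y hxu hxu' hyu hyu'
      constructor
      · rintro (h | ⟨rfl, rfl⟩ | ⟨rfl, rfl⟩)
        · exact ((hG'adj _ _).1 h).1
        · exact absurd rfl hxu'
        · exact absurd rfl hyu'
      · intro h
        refine Or.inl ((hG'adj _ _).2 ⟨h, ?_⟩)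
        rintro (⟨rfl, rfl⟩ | ⟨rfl, rfl⟩)
        · exact hxu rfl
        · exact hyu rfl
    · intro x hxu hxu'
      constructor
      · rintro ((h | ⟨h, rfl⟩ | ⟨h, rfl⟩) | (h | ⟨-, rfl⟩ | ⟨h, rfl⟩))
        · exact ((hG'adj _ _).1 h).1
        · exact absurd h huu'
        · exact absurd h hune
        · exact absurd h (hG'u' x)
        · exact huv
        · exact absurd h.symm hvu'
      · intro h
        by_cases hxv : x = v
        · exact Or.inr (Or.inr (Or.inl ⟨rfl, hxv⟩))
        · refine Or.inl (Or.inl ((hG'adj _ _).2 ⟨h, ?_⟩))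
          rintro (⟨-, rfl⟩ | ⟨rfl, -⟩)
          · exact hxv rfl
          · exact hune rfl
  -- IsSplitAt v v' H1 H2
  · refine ⟨hvv', ?_, ?_, ?_, ?_⟩
    · ext x
      simp only [SimpleGraph.mem_neighborSet, Set.mem_empty_iff_false, iff_false]
      rintro (h | ⟨h, rfl⟩ | ⟨h, -⟩)
      · exact hG'v' x h
      · exact hne h.symm
      · exact hvv' h.symm
    · rintro (h | ⟨h1, h2⟩ | ⟨h1, h2⟩)
      · exact hG'v' v h.symm
      · omega
      · omega
    · intro x y hxv hxv' hyv hyv'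
      constructor
      · rintro (h | ⟨rfl, rfl⟩ | ⟨rfl, rfl⟩)
        · exact Or.inl h
        · exact absurd rfl hyv'
        · exact absurd rfl hxv'
      · rintro (h | ⟨rfl, rfl⟩ | ⟨rfl, rfl⟩)
        · exact Or.inl h
        · exact absurd rfl hyv
        · exact absurd rfl hxv
    · intro x hxv hxv'
      constructor
      · rintro ((h | ⟨h, rfl⟩ | ⟨h, rfl⟩) | (h | ⟨h, rfl⟩ | ⟨-, rfl⟩))
        · exact Or.inl h
        · exact absurd h hvu'
        · exact absurd h hvv'
        · exact absurd h (hG'v' x)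
        · exact absurd h.symm hne
        · exact Or.inr (Or.inr ⟨rfl, rfl⟩)
      · rintro (h | ⟨h, rfl⟩ | ⟨-, rfl⟩)
        · exact Or.inl (Or.inl h)
        · exact absurd h hvu'
        · exact Or.inr (Or.inr (Or.inr ⟨rfl, rfl⟩))
  -- neighborSet H1 u' = {v}
  · ext x
    simp only [SimpleGraph.mem_neighborSet, Set.mem_singleton_iff]
    constructor
    · rintro (h | ⟨-, rfl⟩ | ⟨h, -⟩)
      · exact absurd h (hG'u' x)
      · rfl
      · exact absurd h.symm hvu'
    · rintro rfl
      tauto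
  -- neighborSet H2 v' = {u'}
  · ext x
    simp only [SimpleGraph.mem_neighborSet, Set.mem_singleton_iff]
    constructor
    · rintro (h | ⟨h, -⟩ | ⟨-, rfl⟩)
      · exact absurd h (hG'v' x)
      · exact absurd h.symm hne
      · rfl
    · rintro rfl
      tauto
  -- adjacency characterization
  · exact fun x y => Iff.rfl
  -- 2-club
  · set I := inducedOn
      ⟨fun x y => G'.Adj x y ∨ (x = u' ∧ y = v') ∨ (x = v' ∧ y = u'), by
        constructor
        intro x y h
        rcases h with h | ⟨rfl, rfl⟩ | ⟨rfl, rfl⟩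
        · exact Or.inl h.symm
        · exact Or.inr (Or.inr ⟨rfl, rfl⟩)
        · exact Or.inr (Or.inl ⟨rfl, rfl⟩), by
        constructor
        intro x h
        rcases h with h | ⟨h1, h2⟩ | ⟨h1, h2⟩
        · exact G'.loopless.irrefl x h
        · omega
        · omega⟩ {u', v'} with hI
    have hIadj : ∀ a b, I.Adj a b → a ∈ ({u', v'} : Set ℕ) ∧ b ∈ ({u', v'} : Set ℕ) := by
      intro a b h
      exact ⟨h.2.1, h.2.2⟩
    have hIu'v' : I.Adj u' v' := by
      refine ⟨Or.inr (Or.inl ⟨rfl, rfl⟩), ?_, ?_⟩ <;> simp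
    intro a b hr
    by_cases hab : a = b
    · subst hab
      simp [SimpleGraph.dist_self]
    · have hmem : ∀ c d : ℕ, I.Reachable c d → c ≠ d → c ∈ ({u', v'} : Set ℕ) := by
        intro c d hcd hne'
        obtain ⟨w⟩ := hcd
        cases w with
        | nil => exact absurd rfl hne'
        | cons h p => exact (hIadj _ _ h).1
      have ha : a ∈ ({u', v'} : Set ℕ) := hmem a b hr hab
      have hb : b ∈ ({u', v'} : Set ℕ) := hmem b a hr.symm (Ne.symm hab)
      have hadj : I.Adj a b := by
        rcases ha with rfl | rfl <;> rcases hb with rfl | rfl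
        · exact absurd rfl hab
        · exact hIu'v'
        · exact hIu'v'.symm
        · exact absurd rfl hab
      calc I.dist a b ≤ (SimpleGraph.Walk.cons hadj SimpleGraph.Walk.nil).length :=
            SimpleGraph.dist_le _
        _ ≤ 2 := by simp
end

section
/- Let y be a cut vertex of a graph G and A a connected component of G − y such that G[A ∪ {y}] is a 2-club and A contains a vertex at distance exactly 2 from y. If y has exactly one neighbor in B = V(G) ∖ (A ∪ {y}), then 2ccedvs(G) = 2ccedvs(G − y − A) + 1. -/
open SimpleGraph

section Infra

open SimpleGraph

variable {G H K : SimpleGraph ℕ}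

lemma edgeSet_finite_of_support_s7 (h : G.support.Finite) : G.edgeSet.Finite := by
  apply Set.Finite.subset ((h.prod h).image (fun p => s(p.1, p.2)))
  intro e
  induction e with
  | _ x z =>
    intro he
    rw [SimpleGraph.mem_edgeSet] at he
    exact ⟨(x, z), ⟨⟨z, he⟩, ⟨x, he.symm⟩⟩, rfl⟩

lemma reach_mem_support_of_ne {u v : ℕ} (h : G.Reachable u v) (hne : u ≠ v) :
    u ∈ G.support := by
  obtain ⟨p⟩ := h
  cases p with
  | nil => exact absurd rfl hne
  | cons h _ => exact ⟨_, h⟩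

lemma walk_le_two_cases {u v : ℕ} (p : G.Walk u v) (hl : p.length ≤ 2) :
    u = v ∨ G.Adj u v ∨ ∃ m, G.Adj u m ∧ G.Adj m v := by
  cases p with
  | nil => exact Or.inl rfl
  | cons h q =>
    cases q with
    | nil => exact Or.inr (Or.inl h)
    | cons h' q' =>
      cases q' with
      | nil => exact Or.inr (Or.inr ⟨_, h, h'⟩)
      | cons h'' q'' => simp [SimpleGraph.Walk.length_cons] at hl

lemma reach_dist_le_two_cases {u v : ℕ} (h : G.Reachable u v) (hd : G.dist u v ≤ 2) :
    u = v ∨ G.Adj u v ∨ ∃ m, G.Adj u m ∧ G.Adj m v := by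
  obtain ⟨p, hp⟩ := h.exists_walk_length_eq_dist
  exact walk_le_two_cases p (by omega)

lemma dist_le_one_of_adj {u v : ℕ} (h : G.Adj u v) : G.dist u v ≤ 1 :=
  SimpleGraph.dist_le (SimpleGraph.Walk.cons h SimpleGraph.Walk.nil)

lemma dist_le_two_of_mid {u m v : ℕ} (h1 : G.Adj u m) (h2 : G.Adj m v) :
    G.dist u v ≤ 2 :=
  SimpleGraph.dist_le (SimpleGraph.Walk.cons h1 (SimpleGraph.Walk.cons h2 SimpleGraph.Walk.nil))

lemma opsApply_append_s7 {l₁ l₂ : List Op} {G₁ G₂ G₃ : SimpleGraph ℕ}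
    (h₁ : OpsApply l₁ G₁ G₂) (h₂ : OpsApply l₂ G₂ G₃) : OpsApply (l₁ ++ l₂) G₁ G₃ := by
  induction l₁ generalizing G₁ with
  | nil =>
    have : G₂ = G₁ := h₁
    rw [List.nil_append]
    rw [this] at h₂
    exact h₂
  | cons o l ih =>
    obtain ⟨G', ho, hl⟩ := h₁
    exact ⟨G', ho, ih hl⟩

lemma support_deleteEdges_subset (s : Set (Sym2 ℕ)) :
    (G.deleteEdges s).support ⊆ G.support := by
  rintro x ⟨z, hz⟩
  exact ⟨z, hz.1⟩

lemma IsSplitAt.support_subset {v v' : ℕ} (h : IsSplitAt v v' G H) :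
    H.support ⊆ G.support ∪ {v, v'} := by
  obtain ⟨hne, hiso, hnadj, h4, h5⟩ := h
  rintro x ⟨z, hz⟩
  by_cases hxv : x = v
  · exact Or.inr (by simp [hxv])
  by_cases hxv' : x = v'
  · exact Or.inr (by simp [hxv'])
  by_cases hzv : z = v
  · subst hzv
    have := (h5 x hxv hxv').1 (Or.inl hz.symm)
    exact Or.inl ⟨_, this.symm⟩
  by_cases hzv' : z = v'
  · subst hzv'
    have := (h5 x hxv hxv').1 (Or.inr hz.symm)
    exact Or.inl ⟨_, this.symm⟩
  · exact Or.inl ⟨z, (h4 x z hxv hxv' hzv hzv').1 hz⟩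

lemma opsApply_support_finite {l : List Op} (h : OpsApply l G H)
    (hG : G.support.Finite) : H.support.Finite := by
  induction l generalizing G with
  | nil => have : H = G := h; rw [this]; exact hG
  | cons o l ih =>
    obtain ⟨G', ho, hl⟩ := h
    refine ih hl ?_
    cases o with
    | del u v =>
      obtain ⟨hadj, rfl⟩ := ho
      exact hG.subset (support_deleteEdges_subset _)
    | split v v' =>
      exact (hG.union ((Set.finite_singleton v').insert v)).subset ho.support_subset

lemma isolated_not_mem_edge {v' : ℕ} (hiso : G.neighborSet v' = ∅) {e : Sym2 ℕ}
    (he : e ∈ G.edgeSet) : v' ∉ e := by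
  induction e with
  | _ x z =>
    rw [SimpleGraph.mem_edgeSet] at he
    intro hm
    rw [Sym2.mem_iff] at hm
    rcases hm with rfl | rfl
    · exact (Set.eq_empty_iff_forall_notMem.mp hiso z) he
    · exact (Set.eq_empty_iff_forall_notMem.mp hiso x) he.symm

end Infra
section CertDefs

open SimpleGraph

/-- `e` is covered by an edge of `H` via `φ`. -/
def covered (H : SimpleGraph ℕ) (φ : ℕ → ℕ) (e : Sym2 ℕ) : Prop :=
  ∃ p q, H.Adj p q ∧ s(φ p, φ q) = e

def uncov (Γ H : SimpleGraph ℕ) (φ : ℕ → ℕ) : Set (Sym2 ℕ) :=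
  {e | e ∈ Γ.edgeSet ∧ ¬ covered H φ e}

structure Cert (Γ H : SimpleGraph ℕ) (φ : ℕ → ℕ) : Prop where
  hom : ∀ ⦃p q⦄, H.Adj p q → Γ.Adj (φ p) (φ q)
  club : Is2ClubGraph H
  fin : H.support.Finite

noncomputable def certCost (Γ H : SimpleGraph ℕ) (φ : ℕ → ℕ) : ℕ :=
  (H.support.ncard - (φ '' H.support).ncard) + (uncov Γ H φ).ncard

lemma uncov_subset {Γ H : SimpleGraph ℕ} {φ : ℕ → ℕ} : uncov Γ H φ ⊆ Γ.edgeSet :=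
  fun _ he => he.1

/-- A partial isomorphism between the supports of two graphs. -/
structure GEquivOn (H H' : SimpleGraph ℕ) (ψ : ℕ → ℕ) : Prop where
  inj : Set.InjOn ψ H.support
  img : ψ '' H.support = H'.support
  iff : ∀ p q, p ∈ H.support → q ∈ H.support → (H.Adj p q ↔ H'.Adj (ψ p) (ψ q))

variable {H H' : SimpleGraph ℕ} {ψ : ℕ → ℕ}

lemma GEquivOn.reachable_lift (E : GEquivOn H H' ψ) {u v pu pv : ℕ}
    (p : H'.Walk u v)
    (hpu : pu ∈ H.support) (hpv : pv ∈ H.support) (hu : ψ pu = u) (hv : ψ pv = v) :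
    H.Reachable pu pv := by
  induction p generalizing pu with
  | nil =>
    cases E.inj hpu hpv (hu.trans hv.symm)
    exact SimpleGraph.Reachable.refl _
  | @cons a b c h q ih =>
    have hx : b ∈ H'.support := ⟨_, h.symm⟩
    rw [← E.img] at hx
    obtain ⟨px, hpx, hψx⟩ := hx
    have hadj : H.Adj pu px := (E.iff pu px hpu hpx).2 (by rw [hu, hψx]; exact h)
    exact (SimpleGraph.Adj.reachable hadj).trans (ih hpx hψx hv)

lemma GEquivOn.club (E : GEquivOn H H' ψ) (hc : Is2ClubGraph H) : Is2ClubGraph H' := by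
  intro u v hr
  by_cases huv : u = v
  · subst huv; simp [SimpleGraph.dist_self]
  have hu : u ∈ H'.support := reach_mem_support_of_ne hr huv
  have hv : v ∈ H'.support := reach_mem_support_of_ne hr.symm (Ne.symm huv)
  rw [← E.img] at hu hv
  obtain ⟨pu, hpu, hψu⟩ := hu
  obtain ⟨pv, hpv, hψv⟩ := hv
  obtain ⟨p⟩ := hr
  have hreach := E.reachable_lift p hpu hpv hψu hψv
  have hd := hc _ _ hreach
  rcases reach_dist_le_two_cases hreach hd with heq | hadj | ⟨m, h1, h2⟩
  · exact absurd (by rw [← hψu, ← hψv, heq]) huv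
  · have h2 := (E.iff _ _ hpu hpv).1 hadj
    rw [hψu, hψv] at h2
    exact le_trans (dist_le_one_of_adj h2) one_le_two
  · have hm : m ∈ H.support := ⟨_, h1.symm⟩
    have e1 := (E.iff _ _ hpu hm).1 h1
    have e2 := (E.iff _ _ hm hpv).1 h2
    rw [hψu] at e1; rw [hψv] at e2
    exact dist_le_two_of_mid e1 e2

/-- The pushforward of a graph along a map. -/
def Push (H : SimpleGraph ℕ) (ψ : ℕ → ℕ) : SimpleGraph ℕ where
  Adj a c := a ≠ c ∧ ∃ p q, ψ p = a ∧ ψ q = c ∧ H.Adj p q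
  symm := by
    constructor
    rintro a c ⟨hne, p, q, hp, hq, h⟩
    exact ⟨hne.symm, q, p, hq, hp, h.symm⟩
  loopless := ⟨fun x h => h.1 rfl⟩

lemma push_support (H : SimpleGraph ℕ) (ψ : ℕ → ℕ) (hinj : Set.InjOn ψ H.support) :
    (Push H ψ).support = ψ '' H.support := by
  ext a
  constructor
  · rintro ⟨c, ⟨hne, p, q, hp, hq, h⟩⟩
    exact ⟨p, ⟨_, h⟩, hp⟩
  · rintro ⟨p, ⟨q, h⟩, rfl⟩
    refine ⟨ψ q, ?_, p, q, rfl, rfl, h⟩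
    intro heq
    have hpq : p = q := hinj ⟨_, h⟩ ⟨_, h.symm⟩ heq
    subst hpq
    exact H.loopless.irrefl _ h

lemma gequiv_push (H : SimpleGraph ℕ) (ψ : ℕ → ℕ) (hinj : Set.InjOn ψ H.support) :
    GEquivOn H (Push H ψ) ψ := by
  refine ⟨hinj, (push_support H ψ hinj).symm, ?_⟩
  intro p q hp hq
  constructor
  · intro h
    refine ⟨?_, p, q, rfl, rfl, h⟩
    intro heq
    have hpq : p = q := hinj hp hq heq
    subst hpq
    exact H.loopless.irrefl _ h
  · rintro ⟨hne, p', q', hp', hq', h⟩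
    have e1 : p' = p := hinj ⟨_, h⟩ hp hp'
    have e2 : q' = q := hinj ⟨_, h.symm⟩ hq hq'
    rwa [e1, e2] at h

lemma injOn_of_ncard_image {s : Set ℕ} {φ : ℕ → ℕ} (hs : s.Finite)
    (h : (φ '' s).ncard = s.ncard) : Set.InjOn φ s := by
  by_contra hni
  rw [Set.InjOn] at hni
  push_neg at hni
  obtain ⟨a, ha, b, hb, heq, hne⟩ := hni
  have hsub : φ '' s ⊆ φ '' (s \ {b}) := by
    rintro x ⟨c, hc, rfl⟩
    by_cases hcb : c = b
    · exact ⟨a, ⟨ha, by simp [hne]⟩, by rw [hcb, heq]⟩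
    · exact ⟨c, ⟨hc, by simp [hcb]⟩, rfl⟩
  have h1 : (φ '' s).ncard ≤ (s \ {b}).ncard :=
    le_trans (Set.ncard_le_ncard hsub ((hs.diff).image _)) (Set.ncard_image_le (hs.diff))
  have h2 : (s \ {b}).ncard = s.ncard - 1 := Set.ncard_diff_singleton_of_mem hb
  have h3 : 0 < s.ncard := (Set.ncard_pos hs).mpr ⟨b, hb⟩
  omega

lemma cost1_mono {φ : ℕ → ℕ} {U W : Set ℕ} (hW : W.Finite) (hUW : U ⊆ W) :
    U.ncard + (φ '' W).ncard ≤ W.ncard + (φ '' U).ncard := by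
  have h1 : φ '' W ⊆ (φ '' U) ∪ (φ '' (W \ U)) := by
    rw [← Set.image_union]
    exact Set.image_mono (by rw [Set.union_diff_cancel hUW])
  have h2 : (φ '' W).ncard ≤ (φ '' U).ncard + (φ '' (W \ U)).ncard :=
    le_trans (Set.ncard_le_ncard h1 (((hW.subset hUW).image _).union ((hW.diff).image _)))
      (Set.ncard_union_le _ _)
  have h3 : (φ '' (W \ U)).ncard ≤ (W \ U).ncard := Set.ncard_image_le (hW.diff)
  have h4 : (W \ U).ncard + U.ncard = W.ncard := Set.ncard_diff_add_ncard_of_subset hUW hW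
  omega

end CertDefs
section Alpha

open SimpleGraph

variable {Γ Γ₁ H₀ : SimpleGraph ℕ}

lemma split_adj_down {v v' x z : ℕ} (ho : IsSplitAt v v' Γ Γ₁) (h : Γ₁.Adj x z) :
    Γ.Adj (if x = v' then v else x) (if z = v' then v else z) := by
  obtain ⟨hne, hiso, hnadj, h4, h5⟩ := ho
  by_cases hx' : x = v'
  · rw [if_pos hx']
    rw [hx'] at h
    by_cases hz' : z = v'
    · rw [hz'] at h; exact absurd h (Γ₁.loopless.irrefl _)
    · rw [if_neg hz']
      by_cases hzv : z = v
      · rw [hzv] at h; exact absurd h.symm hnadj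
      · exact (h5 z hzv hz').1 (Or.inr h)
  · rw [if_neg hx']
    by_cases hz' : z = v'
    · rw [if_pos hz']
      rw [hz'] at h
      by_cases hxv : x = v
      · rw [hxv] at h; exact absurd h hnadj
      · exact ((h5 x hxv hx').1 (Or.inr h.symm)).symm
    · rw [if_neg hz']
      by_cases hxv : x = v
      · rw [hxv] at h ⊢
        by_cases hzv : z = v
        · rw [hzv] at h; exact absurd h (Γ₁.loopless.irrefl _)
        · exact (h5 z hzv hz').1 (Or.inl h)
      · by_cases hzv : z = v
        · rw [hzv] at h ⊢; exact ((h5 x hxv hx').1 (Or.inl h.symm)).symm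
        · exact (h4 x z hxv hx' hzv hz').1 h

lemma split_uncov_le {v v' : ℕ} (ho : IsSplitAt v v' Γ Γ₁) (hfin1 : Γ₁.support.Finite)
    (φ : ℕ → ℕ) :
    (uncov Γ H₀ (fun t => if φ t = v' then v else φ t)).ncard ≤ (uncov Γ₁ H₀ φ).ncard := by
  classical
  obtain ⟨hne, hiso, hnadj, h4, h5⟩ := ho
  set φ₀ : ℕ → ℕ := fun t => if φ t = v' then v else φ t with hφ₀
  set swp : ℕ → ℕ := fun t => if t = v then v' else t with hswp
  set bk : ℕ → ℕ := fun t => if t = v' then v else t with hbk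
  set f : Sym2 ℕ → Sym2 ℕ := fun e => if e ∈ Γ₁.edgeSet then e else Sym2.map swp e with hf
  set g : Sym2 ℕ → Sym2 ℕ := fun e => if v' ∈ e then Sym2.map bk e else e with hg
  have key : ∀ e ∈ uncov Γ H₀ φ₀, f e ∈ uncov Γ₁ H₀ φ ∧ g (f e) = e := by
    intro e he
    induction e with
    | _ x z =>
      obtain ⟨hmemΓ, hnc⟩ := he
      rw [SimpleGraph.mem_edgeSet] at hmemΓ
      have hx' : x ≠ v' := by
        intro hh; rw [hh] at hmemΓ
        exact Set.eq_empty_iff_forall_notMem.mp hiso z hmemΓ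
      have hz' : z ≠ v' := by
        intro hh; rw [hh] at hmemΓ
        exact Set.eq_empty_iff_forall_notMem.mp hiso x hmemΓ.symm
      by_cases hmem1 : s(x, z) ∈ Γ₁.edgeSet
      · have hfe : f s(x, z) = s(x, z) := by simp only [hf]; rw [if_pos hmem1]
        rw [hfe]
        refine ⟨⟨hmem1, ?_⟩, ?_⟩
        · rintro ⟨p, q, hpq, heq⟩
          rw [Sym2.eq_iff] at heq
          refine hnc ⟨p, q, hpq, ?_⟩
          rcases heq with ⟨h1, h2⟩ | ⟨h1, h2⟩
          · simp only [hφ₀, h1, h2, if_neg hx', if_neg hz']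
          · simp only [hφ₀, h1, h2, if_neg hx', if_neg hz']
            exact Sym2.eq_swap
        · simp only [hg]
          rw [if_neg]
          rw [Sym2.mem_iff]
          push_neg
          exact ⟨Ne.symm hx', Ne.symm hz'⟩
      · by_cases hxv : x = v
        · rw [hxv] at hmemΓ hnc hmem1 ⊢
          have hzv : z ≠ v := by
            intro hh; rw [hh] at hmemΓ; exact Γ.loopless.irrefl _ hmemΓ
          have hv'z : Γ₁.Adj v' z := by
            rcases (h5 z hzv hz').2 hmemΓ with h | h
            · exact absurd (Γ₁.mem_edgeSet.mpr h) hmem1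
            · exact h
          have hfe : f s(v, z) = s(v', z) := by
            simp only [hf]
            rw [if_neg hmem1, Sym2.map_pair_eq]
            simp only [hswp, if_pos rfl, if_neg hzv]
          rw [hfe]
          refine ⟨⟨Γ₁.mem_edgeSet.mpr hv'z, ?_⟩, ?_⟩
          · rintro ⟨p, q, hpq, heq⟩
            rw [Sym2.eq_iff] at heq
            refine hnc ⟨p, q, hpq, ?_⟩
            rcases heq with ⟨h1, h2⟩ | ⟨h1, h2⟩
            · simp only [hφ₀, h1, h2, eq_self_iff_true, ite_true, if_neg hz']
            · simp only [hφ₀, h1, h2, eq_self_iff_true, ite_true, if_neg hz']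
              exact Sym2.eq_swap
          · simp only [hg]
            rw [if_pos (by rw [Sym2.mem_iff]; exact Or.inl rfl), Sym2.map_pair_eq]
            simp only [hbk, if_pos rfl, if_neg hz']
        · by_cases hzv : z = v
          · rw [hzv] at hmemΓ hnc hmem1 ⊢
            have hv'x : Γ₁.Adj v' x := by
              rcases (h5 x hxv hx').2 hmemΓ.symm with h | h
              · exact absurd (Γ₁.mem_edgeSet.mpr h.symm) hmem1
              · exact h
            have hfe : f s(x, v) = s(x, v') := by
              simp only [hf]
              rw [if_neg hmem1, Sym2.map_pair_eq]
              simp only [hswp, if_pos rfl, if_neg hxv]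
            rw [hfe]
            refine ⟨⟨Γ₁.mem_edgeSet.mpr hv'x.symm, ?_⟩, ?_⟩
            · rintro ⟨p, q, hpq, heq⟩
              rw [Sym2.eq_iff] at heq
              refine hnc ⟨p, q, hpq, ?_⟩
              rcases heq with ⟨h1, h2⟩ | ⟨h1, h2⟩
              · simp only [hφ₀, h1, h2, eq_self_iff_true, ite_true, if_neg hx']
              · simp only [hφ₀, h1, h2, eq_self_iff_true, ite_true, if_neg hx']
                exact Sym2.eq_swap
            · simp only [hg]
              rw [if_pos (by rw [Sym2.mem_iff]; exact Or.inr rfl), Sym2.map_pair_eq]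
              simp only [hbk, if_pos rfl, if_neg hx']
          · exact absurd (Γ₁.mem_edgeSet.mpr ((h4 x z hxv hx' hzv hz').2 hmemΓ)) hmem1
  refine Set.ncard_le_ncard_of_injOn f (fun e he => (key e he).1) ?_ ?_
  · intro a ha b hb hab
    rw [← (key a ha).2, ← (key b hb).2, hab]
  · exact (edgeSet_finite_of_support_s7 hfin1).subset uncov_subset

lemma cert_of_ops {l : List Op} {Γ H : SimpleGraph ℕ} (hap : OpsApply l Γ H)
    (hfin : Γ.support.Finite) (hclub : Is2ClubGraph H) :
    ∃ H₀ φ, Cert Γ H₀ φ ∧ certCost Γ H₀ φ ≤ l.length := by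
  induction l generalizing Γ with
  | nil =>
    have hH : H = Γ := hap
    subst hH
    refine ⟨H, id, ⟨fun p q h => h, hclub, hfin⟩, ?_⟩
    have hu : uncov H H id = ∅ := by
      ext e
      simp only [uncov, Set.mem_setOf_eq, Set.mem_empty_iff_false, iff_false, not_and, not_not]
      intro he
      induction e with
      | _ x z =>
        rw [SimpleGraph.mem_edgeSet] at he
        exact ⟨x, z, he, rfl⟩
    rw [certCost, hu, Set.image_id]
    simp
  | cons o l ih =>
    obtain ⟨Γ₁, ho, hl⟩ := hap
    have hfin1 : Γ₁.support.Finite := opsApply_support_finite (l := [o]) ⟨Γ₁, ho, rfl⟩ hfin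
    obtain ⟨H₀, φ, hcert, hcost⟩ := ih hl hfin1
    cases o with
    | del u v =>
      obtain ⟨hadj, rfl⟩ := ho
      refine ⟨H₀, φ, ⟨fun p q h => (Γ.deleteEdges_le _) (hcert.hom h), hcert.club, hcert.fin⟩, ?_⟩
      have hins : uncov Γ H₀ φ = insert s(u, v) (uncov (Γ.deleteEdges {s(u, v)}) H₀ φ) := by
        ext e
        simp only [uncov, Set.mem_setOf_eq, Set.mem_insert_iff, edgeSet_deleteEdges,
          Set.mem_diff]
        constructor
        · rintro ⟨he, hnc⟩
          by_cases heq : e = s(u, v)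
          · exact Or.inl heq
          · exact Or.inr ⟨⟨he, by simpa using heq⟩, hnc⟩
        · rintro (rfl | ⟨⟨he, _⟩, hnc⟩)
          · refine ⟨Γ.mem_edgeSet.mpr hadj, ?_⟩
            rintro ⟨p, q, hpq, heq⟩
            have h2 := hcert.hom hpq
            rw [SimpleGraph.deleteEdges_adj] at h2
            exact h2.2 (by simpa using heq)
          · exact ⟨he, hnc⟩
      have hnm : s(u, v) ∉ uncov (Γ.deleteEdges {s(u, v)}) H₀ φ := by
        intro hmem
        have := hmem.1
        rw [edgeSet_deleteEdges] at this
        simp at this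
      have hfinu : (uncov (Γ.deleteEdges {s(u, v)}) H₀ φ).Finite :=
        (edgeSet_finite_of_support_s7 hfin1).subset uncov_subset
      rw [certCost, hins, Set.ncard_insert_of_notMem hnm hfinu]
      rw [certCost] at hcost
      simp only [List.length_cons]
      omega
    | split v v' =>
      refine ⟨H₀, fun t => if φ t = v' then v else φ t, ⟨?_, hcert.club, hcert.fin⟩, ?_⟩
      · intro p q h
        exact split_adj_down ho (hcert.hom h)
      · have huncov := split_uncov_le (H₀ := H₀) ho hfin1 φ
        have hfinS : H₀.support.Finite := hcert.fin
        have himg : (φ '' H₀.support) \ {v'} ⊆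
            (fun t => if φ t = v' then v else φ t) '' H₀.support := by
          rintro t ⟨⟨p, hp, rfl⟩, hne'⟩
          exact ⟨p, hp, by simp only [if_neg (by simpa using hne')]⟩
        have h1 : (φ '' H₀.support).ncard ≤ ((φ '' H₀.support) \ {v'}).ncard + 1 := by
          refine le_trans (Set.ncard_le_ncard (s := φ '' H₀.support)
            (t := insert v' ((φ '' H₀.support) \ {v'})) ?_ ?_) (Set.ncard_insert_le _ _)
          · intro t ht
            by_cases htv : t = v'
            · exact Or.inl htv
            · exact Or.inr ⟨ht, by simpa using htv⟩
          · exact ((hfinS.image _).diff).insert _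
        have h2 : ((φ '' H₀.support) \ {v'}).ncard ≤
            ((fun t => if φ t = v' then v else φ t) '' H₀.support).ncard :=
          Set.ncard_le_ncard himg (hfinS.image _)
        rw [certCost] at hcost ⊢
        simp only [List.length_cons]
        omega

end Alpha
section Beta

open SimpleGraph

lemma dels_of_finite : ∀ (n : ℕ) (Γ : SimpleGraph ℕ) (D : Set (Sym2 ℕ)), D.Finite →
    D.ncard = n → D ⊆ Γ.edgeSet →
    ∃ l : List Op, l.length = n ∧ OpsApply l Γ (Γ.deleteEdges D) := by
  intro n
  induction n with
  | zero =>
    intro Γ D hfin hcard hsub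
    have hD : D = ∅ := (Set.ncard_eq_zero hfin).mp hcard
    subst hD
    refine ⟨[], rfl, ?_⟩
    show Γ.deleteEdges ∅ = Γ
    exact SimpleGraph.deleteEdges_empty
  | succ n ihn =>
    intro Γ D hfin hcard hsub
    have hne : D.Nonempty := Set.nonempty_of_ncard_ne_zero (by omega)
    obtain ⟨e, he⟩ := hne
    revert he
    induction e with
    | _ x z =>
      intro he
      have hadj : Γ.Adj x z := Γ.mem_edgeSet.mp (hsub he)
      have hsub' : D \ {s(x, z)} ⊆ (Γ.deleteEdges {s(x, z)}).edgeSet := by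
        intro t ht
        rw [edgeSet_deleteEdges]
        exact ⟨hsub ht.1, ht.2⟩
      have hcard' : (D \ {s(x, z)}).ncard = n := by
        rw [Set.ncard_diff_singleton_of_mem he]
        omega
      obtain ⟨l, hlen, happ⟩ := ihn (Γ.deleteEdges {s(x, z)}) (D \ {s(x, z)})
        (hfin.diff) hcard' hsub'
      have hEq : (Γ.deleteEdges {s(x, z)}).deleteEdges (D \ {s(x, z)}) = Γ.deleteEdges D := by
        ext a b
        simp only [SimpleGraph.deleteEdges_adj, Set.mem_diff, Set.mem_singleton_iff]
        constructor
        · rintro ⟨⟨ha, hns⟩, hnd⟩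
          refine ⟨ha, fun hd => ?_⟩
          by_cases hq : s(a, b) = s(x, z)
          · exact hns hq
          · exact hnd ⟨hd, hq⟩
        · rintro ⟨ha, hnd⟩
          exact ⟨⟨ha, fun hq => hnd (hq ▸ he)⟩, fun hd => hnd hd.1⟩
      rw [hEq] at happ
      exact ⟨Op.del x z :: l, by simp [hlen], ⟨Γ.deleteEdges {s(x, z)}, ⟨hadj, rfl⟩, happ⟩⟩

lemma realize_base {Γ₂ H : SimpleGraph ℕ} {φ : ℕ → ℕ}
    (hhom : ∀ ⦃p q⦄, H.Adj p q → Γ₂.Adj (φ p) (φ q))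
    (hcov : ∀ e ∈ Γ₂.edgeSet, covered H φ e)
    (hinj : Set.InjOn φ H.support) : GEquivOn H Γ₂ φ := by
  have himg : φ '' H.support = Γ₂.support := by
    ext t
    constructor
    · rintro ⟨p, ⟨q, hpq⟩, rfl⟩
      exact ⟨φ q, hhom hpq⟩
    · rintro ⟨z, hz⟩
      obtain ⟨p, q, hpq, heq⟩ := hcov s(t, z) (Γ₂.mem_edgeSet.mpr hz)
      rw [Sym2.eq_iff] at heq
      rcases heq with ⟨h1, h2⟩ | ⟨h1, h2⟩
      · exact ⟨p, ⟨q, hpq⟩, h1⟩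
      · exact ⟨q, ⟨p, hpq.symm⟩, h2⟩
  refine ⟨hinj, himg, ?_⟩
  intro p q hp hq
  constructor
  · intro h; exact hhom h
  · intro h
    obtain ⟨p', q', hpq', heq⟩ := hcov s(φ p, φ q) (Γ₂.mem_edgeSet.mpr h)
    rw [Sym2.eq_iff] at heq
    rcases heq with ⟨h1, h2⟩ | ⟨h1, h2⟩
    · have e1 : p' = p := hinj ⟨_, hpq'⟩ hp h1
      have e2 : q' = q := hinj ⟨_, hpq'.symm⟩ hq h2
      rwa [e1, e2] at hpq'
    · have e1 : p' = q := hinj ⟨_, hpq'⟩ hq h1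
      have e2 : q' = p := hinj ⟨_, hpq'.symm⟩ hp h2
      rw [e1, e2] at hpq'
      exact hpq'.symm

lemma realize : ∀ (n : ℕ) (Γ₂ H : SimpleGraph ℕ) (φ : ℕ → ℕ),
    (∀ ⦃p q⦄, H.Adj p q → Γ₂.Adj (φ p) (φ q)) →
    (∀ e ∈ Γ₂.edgeSet, covered H φ e) →
    H.support.Finite →
    H.support.ncard - (φ '' H.support).ncard ≤ n →
    ∃ (l : List Op) (H₂ : SimpleGraph ℕ) (ψ : ℕ → ℕ),
      l.length ≤ n ∧ OpsApply l Γ₂ H₂ ∧ GEquivOn H H₂ ψ := by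
  intro n
  induction n with
  | zero =>
    intro Γ₂ H φ hhom hcov hfin hc
    have hle : (φ '' H.support).ncard ≤ H.support.ncard := Set.ncard_image_le hfin
    have heq : (φ '' H.support).ncard = H.support.ncard := by omega
    exact ⟨[], Γ₂, φ, le_refl 0, rfl, realize_base hhom hcov (injOn_of_ncard_image hfin heq)⟩
  | succ n ihn =>
    intro Γ₂ H φ hhom hcov hfin hc
    by_cases hzero : (φ '' H.support).ncard = H.support.ncard
    · exact ⟨[], Γ₂, φ, Nat.zero_le _, rfl,
        realize_base hhom hcov (injOn_of_ncard_image hfin hzero)⟩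
    have hle : (φ '' H.support).ncard ≤ H.support.ncard := Set.ncard_image_le hfin
    have hninj : ¬ Set.InjOn φ H.support := by
      intro hinj
      exact hzero (Set.ncard_image_of_injOn hinj)
    rw [Set.InjOn] at hninj
    push_neg at hninj
    obtain ⟨p, hp, p', hp', hφeq, hpne⟩ := hninj
    classical
    set m : ℕ → ℕ := fun t => if t = p' then p else t with hm
    have hmp : ∀ t, t ≠ p' → m t = t := fun t ht => by simp only [hm, if_neg ht]
    have hmp' : m p' = p := by simp only [hm, if_pos rfl]
    have hφm : ∀ t, φ (m t) = φ t := by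
      intro t
      by_cases ht : t = p'
      · rw [ht, hmp']; exact hφeq
      · rw [hmp t ht]
    have hm_ne_p' : ∀ t, m t ≠ p' := by
      intro t
      by_cases ht : t = p'
      · rw [ht, hmp']; exact hpne
      · rw [hmp t ht]; exact ht
    have hnopp' : ¬ H.Adj p p' := by
      intro hadj
      have h2 := hhom hadj
      rw [← hφeq] at h2
      exact Γ₂.loopless.irrefl _ h2
    set H₁ := Push H m with hH₁
    have hm_inj_edge : ∀ ⦃a c⦄, H.Adj a c → m a ≠ m c := by
      intro a c hadj hmeq
      by_cases ha : a = p' <;> by_cases hcc : c = p'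
      · rw [ha, hcc] at hadj
        exact H.loopless.irrefl _ hadj
      · rw [ha, hmp', hmp c hcc] at hmeq
        rw [ha, ← hmeq] at hadj
        exact hnopp' hadj.symm
      · rw [hmp a ha, hcc, hmp'] at hmeq
        rw [hcc, hmeq] at hadj
        exact hnopp' hadj
      · rw [hmp a ha, hmp c hcc] at hmeq
        exact H.loopless.irrefl a (hmeq ▸ hadj)
    have hH₁_of : ∀ ⦃a c⦄, H.Adj a c → H₁.Adj (m a) (m c) := by
      intro a c hadj
      exact ⟨hm_inj_edge hadj, a, c, rfl, rfl, hadj⟩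
    have hhom₁ : ∀ ⦃a c⦄, H₁.Adj a c → Γ₂.Adj (φ a) (φ c) := by
      rintro a c ⟨hne', a', c', rfl, rfl, hadj⟩
      rw [hφm a', hφm c']
      exact hhom hadj
    have hcov₁ : ∀ e ∈ Γ₂.edgeSet, covered H₁ φ e := by
      intro e hee
      obtain ⟨a, c, hadj, heqe⟩ := hcov e hee
      exact ⟨m a, m c, hH₁_of hadj, by rw [hφm a, hφm c]; exact heqe⟩
    have hp'iso : p' ∉ H₁.support := by
      rintro ⟨c, ⟨hne', a', c', ha', hc', hadj⟩⟩
      exact hm_ne_p' a' ha'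
    have hsupp_sub : H₁.support ⊆ H.support \ {p'} := by
      rintro a ⟨c, ⟨hne', a', c', ha', hc', hadj⟩⟩
      refine ⟨?_, ?_⟩
      · by_cases ha : a' = p'
        · rw [ha, hmp'] at ha'
          rw [← ha']
          exact hp
        · rw [hmp a' ha] at ha'
          rw [← ha']
          exact ⟨c', hadj⟩
      · intro haP
        rw [Set.mem_singleton_iff] at haP
        rw [haP] at ha'
        exact hm_ne_p' a' ha'
    have hfin₁ : H₁.support.Finite := (hfin.diff).subset hsupp_sub
    have hpmem : p ∈ H₁.support := by
      obtain ⟨c, hadj⟩ := hp'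
      have h2 := hH₁_of hadj
      rw [hmp'] at h2
      exact ⟨m c, h2⟩
    have hmem_mid : ∀ a, a ∈ H.support → a ≠ p → a ≠ p' → a ∈ H₁.support := by
      rintro a ⟨c, hadj⟩ hap hap'
      have h2 := hH₁_of hadj
      rw [hmp a hap'] at h2
      exact ⟨m c, h2⟩
    have hsupp_up : ∀ a, a ∈ H.support → a ≠ p' → a ∈ H₁.support := by
      intro a ha hap'
      by_cases hap : a = p
      · rw [hap]; exact hpmem
      · exact hmem_mid a ha hap hap'
    have hφsupp : φ '' H.support ⊆ φ '' H₁.support := by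
      rintro t ⟨a, ha, rfl⟩
      by_cases hap' : a = p'
      · exact ⟨p, hpmem, by rw [hap', hφeq]⟩
      · exact ⟨a, hsupp_up a ha hap', rfl⟩
    have hcost₁ : H₁.support.ncard - (φ '' H₁.support).ncard ≤ n := by
      have h1 : H₁.support.ncard ≤ (H.support \ {p'}).ncard :=
        Set.ncard_le_ncard hsupp_sub (hfin.diff)
      have h2 : (H.support \ {p'}).ncard = H.support.ncard - 1 :=
        Set.ncard_diff_singleton_of_mem hp'
      have h3 : (φ '' H.support).ncard ≤ (φ '' H₁.support).ncard :=
        Set.ncard_le_ncard hφsupp (hfin₁.image _)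
      omega
    obtain ⟨l₁, H₁s, ψ₁, hlen₁, happ₁, hE₁⟩ := ihn Γ₂ H₁ φ hhom₁ hcov₁ hfin₁ hcost₁
    have hfinS1 : H₁s.support.Finite := by
      rw [← hE₁.img]; exact hfin₁.image _
    obtain ⟨fch, hfch⟩ := hfinS1.infinite_compl.nonempty
    rw [Set.mem_compl_iff] at hfch
    set ψ : ℕ → ℕ := fun t => if t = p' then fch else ψ₁ t with hψ
    have hψp' : ψ p' = fch := by simp only [hψ, if_pos rfl]
    have hψne : ∀ t, t ≠ p' → ψ t = ψ₁ t := fun t ht => by simp only [hψ, if_neg ht]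
    have hψ₁mem : ∀ a, a ∈ H₁.support → ψ₁ a ∈ H₁s.support := by
      intro a ha
      rw [← hE₁.img]
      exact ⟨a, ha, rfl⟩
    have hψinj : Set.InjOn ψ H.support := by
      intro a ha b hb hab
      by_cases hap' : a = p' <;> by_cases hbp' : b = p'
      · rw [hap', hbp']
      · exfalso
        rw [hap', hψp', hψne b hbp'] at hab
        exact hfch (hab ▸ hψ₁mem b (hsupp_up b hb hbp'))
      · exfalso
        rw [hbp', hψp', hψne a hap'] at hab
        exact hfch (hab.symm ▸ hψ₁mem a (hsupp_up a ha hap'))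
      · rw [hψne a hap', hψne b hbp'] at hab
        exact hE₁.inj (hsupp_up a ha hap') (hsupp_up b hb hbp') hab
    set H₂ := Push H ψ with hH₂
    have hE₂ : GEquivOn H H₂ ψ := gequiv_push H ψ hψinj
    set q₀ := ψ₁ p with hq₀
    have hψp : ψ p = q₀ := by rw [hψne p hpne]
    have hq₀mem : q₀ ∈ H₁s.support := hψ₁mem p hpmem
    have hq₀ne : q₀ ≠ fch := fun h => hfch (h ▸ hq₀mem)
    have hψ_to_fch : ∀ c, c ∈ H.support → ψ c = fch → c = p' := by
      intro c hc hcf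
      by_contra hcc
      rw [hψne c hcc] at hcf
      exact hfch (hcf ▸ hψ₁mem c (hsupp_up c hc hcc))
    have hψ_to_q₀ : ∀ a, a ∈ H.support → ψ a = q₀ → a = p := by
      intro a ha haq
      have hanp' : a ≠ p' := by
        intro h
        rw [h, hψp'] at haq
        exact hq₀ne haq.symm
      rw [hψne a hanp'] at haq
      exact hE₁.inj (hsupp_up a ha hanp') hpmem haq
    -- convert H₁ adjacency (away from p, p') back to H adjacency
    have hH₁_back : ∀ ⦃a c⦄, H₁.Adj a c → a ≠ p → c ≠ p → H.Adj a c := by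
      rintro a c ⟨hne', a', c', ha', hc', hadj⟩ hap hcp
      have ha'' : a' = a := by
        by_cases h : a' = p'
        · rw [h, hmp'] at ha'; exact absurd ha'.symm hap
        · rw [hmp a' h] at ha'; exact ha'
      have hc'' : c' = c := by
        by_cases h : c' = p'
        · rw [h, hmp'] at hc'; exact absurd hc'.symm hcp
        · rw [hmp c' h] at hc'; exact hc'
      rw [ha'', hc''] at hadj
      exact hadj
    have hsplit : IsSplitAt q₀ fch H₁s H₂ := by
      refine ⟨hq₀ne, ?_, ?_, ?_, ?_⟩
      · ext t
        simp only [SimpleGraph.mem_neighborSet, Set.mem_empty_iff_false, iff_false]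
        intro hadj
        exact hfch ⟨t, hadj⟩
      · rintro ⟨hne', a, c, ha, hc, hadj⟩
        have hcp' : c = p' := hψ_to_fch c ⟨a, hadj.symm⟩ hc
        have hap : a = p := hψ_to_q₀ a ⟨c, hadj⟩ ha
        rw [hap, hcp'] at hadj
        exact hnopp' hadj
      · intro x z hxq hxf hzq hzf
        constructor
        · rintro ⟨hne', a, c, ha, hc, hadj⟩
          have hanp' : a ≠ p' := fun h => hxf (by rw [← ha, h, hψp'])
          have hcnp' : c ≠ p' := fun h => hzf (by rw [← hc, h, hψp'])
          have hanp : a ≠ p := fun h => hxq (by rw [← ha, h, hψp])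
          have hcnp : c ≠ p := fun h => hzq (by rw [← hc, h, hψp])
          have h1 := hH₁_of hadj
          rw [hmp a hanp', hmp c hcnp'] at h1
          have h2 := (hE₁.iff a c (hsupp_up a ⟨c, hadj⟩ hanp')
            (hsupp_up c ⟨a, hadj.symm⟩ hcnp')).1 h1
          rw [hψne a hanp'] at ha
          rw [hψne c hcnp'] at hc
          rw [← ha, ← hc]
          exact h2
        · intro hadj
          have hx : x ∈ H₁s.support := ⟨z, hadj⟩
          have hz : z ∈ H₁s.support := ⟨x, hadj.symm⟩
          rw [← hE₁.img] at hx hz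
          obtain ⟨a, haS, rfl⟩ := hx
          obtain ⟨c, hcS, rfl⟩ := hz
          have hanp' : a ≠ p' := fun h => hp'iso (h ▸ haS)
          have hcnp' : c ≠ p' := fun h => hp'iso (h ▸ hcS)
          have hanp : a ≠ p := fun h => hxq (by rw [h])
          have hcnp : c ≠ p := fun h => hzq (by rw [h])
          have h1 := (hE₁.iff a c haS hcS).2 hadj
          have h2 := hH₁_back h1 hanp hcnp
          have h3 := (hE₂.iff a c ((hsupp_sub haS).1) ((hsupp_sub hcS).1)).1 h2
          rw [hψne a hanp', hψne c hcnp'] at h3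
          exact h3
      · intro x hxq hxf
        constructor
        · rintro (⟨hne', a, c, ha, hc, hadj⟩ | ⟨hne', a, c, ha, hc, hadj⟩)
          · have hap : a = p := hψ_to_q₀ a ⟨c, hadj⟩ ha
            have hcnp' : c ≠ p' := fun h => hxf (by rw [← hc, h, hψp'])
            have hcnp : c ≠ p := fun h => hxq (by rw [← hc, h, hψp])
            rw [hap] at hadj
            have h1 := hH₁_of hadj
            rw [hmp p hpne, hmp c hcnp'] at h1
            have h2 := (hE₁.iff p c hpmem (hsupp_up c ⟨p, hadj.symm⟩ hcnp')).1 h1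
            rw [hψne c hcnp'] at hc
            rw [← hc]
            exact h2
          · have hap' : a = p' := hψ_to_fch a ⟨c, hadj⟩ ha
            have hcnp' : c ≠ p' := fun h => hxf (by rw [← hc, h, hψp'])
            have hcnp : c ≠ p := fun h => hxq (by rw [← hc, h, hψp])
            rw [hap'] at hadj
            have h1 := hH₁_of hadj
            rw [hmp', hmp c hcnp'] at h1
            have h2 := (hE₁.iff p c hpmem (hsupp_up c ⟨p', hadj.symm⟩ hcnp')).1 h1
            rw [hψne c hcnp'] at hc
            rw [← hc]
            exact h2
        · intro hadj
          have hx : x ∈ H₁s.support := ⟨q₀, hadj.symm⟩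
          rw [← hE₁.img] at hx
          obtain ⟨c, hcS, rfl⟩ := hx
          have hcnp' : c ≠ p' := fun h => hp'iso (h ▸ hcS)
          have hcnp : c ≠ p := by
            intro h
            rw [h] at hxq
            exact hxq rfl
          have h1 := (hE₁.iff p c hpmem hcS).2 hadj
          obtain ⟨hne', a', c', ha', hc', hadj'⟩ := h1
          have hc'' : c' = c := by
            by_cases h : c' = p'
            · rw [h, hmp'] at hc'; exact absurd hc'.symm hcnp
            · rw [hmp c' h] at hc'; exact hc'
          rw [hc''] at hadj'
          have hcmemH : c ∈ H.support := ⟨a', hadj'.symm⟩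
          by_cases h : a' = p'
          · rw [h] at hadj'
            right
            have := (hE₂.iff p' c hp' hcmemH).1 hadj'
            rw [hψp', hψne c hcnp'] at this
            exact this
          · rw [hmp a' h] at ha'
            rw [ha'] at hadj'
            left
            have := (hE₂.iff p c hp hcmemH).1 hadj'
            rw [hψp, hψne c hcnp'] at this
            exact this
    refine ⟨l₁ ++ [Op.split q₀ fch], H₂, ψ, ?_, ?_, hE₂⟩
    · simp only [List.length_append, List.length_singleton]
      omega
    · exact opsApply_append_s7 happ₁ ⟨H₂, hsplit, rfl⟩

lemma ops_of_cert {Γ H : SimpleGraph ℕ} {φ : ℕ → ℕ} (hc : Cert Γ H φ)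
    (hfin : Γ.support.Finite) :
    ∃ (l : List Op) (H₂ : SimpleGraph ℕ), l.length ≤ certCost Γ H φ ∧
      OpsApply l Γ H₂ ∧ Is2ClubGraph H₂ := by
  have hDfin : (uncov Γ H φ).Finite := (edgeSet_finite_of_support_s7 hfin).subset uncov_subset
  obtain ⟨l₀, hlen₀, happ₀⟩ := dels_of_finite (uncov Γ H φ).ncard Γ (uncov Γ H φ)
    hDfin rfl uncov_subset
  have hhom₂ : ∀ ⦃p q⦄, H.Adj p q → (Γ.deleteEdges (uncov Γ H φ)).Adj (φ p) (φ q) := by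
    intro p q h
    rw [SimpleGraph.deleteEdges_adj]
    refine ⟨hc.hom h, ?_⟩
    intro hmem
    exact hmem.2 ⟨p, q, h, rfl⟩
  have hcov₂ : ∀ e ∈ (Γ.deleteEdges (uncov Γ H φ)).edgeSet, covered H φ e := by
    intro e hee
    rw [edgeSet_deleteEdges] at hee
    by_contra hnc
    exact hee.2 ⟨hee.1, hnc⟩
  obtain ⟨l₁, H₂, ψ, hlen₁, happ₁, hE⟩ := realize
    (H.support.ncard - (φ '' H.support).ncard) (Γ.deleteEdges (uncov Γ H φ)) H φ
    hhom₂ hcov₂ hc.fin le_rfl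
  refine ⟨l₀ ++ l₁, H₂, ?_, opsApply_append_s7 happ₀ happ₁, hE.club hc.club⟩
  rw [certCost]
  simp only [List.length_append]
  omega

end Beta
section UnionClub

open SimpleGraph

lemma support_sup (X Y : SimpleGraph ℕ) : (X ⊔ Y).support = X.support ∪ Y.support := by
  ext t
  constructor
  · rintro ⟨z, hz | hz⟩
    · exact Or.inl ⟨z, hz⟩
    · exact Or.inr ⟨z, hz⟩
  · rintro (⟨z, hz⟩ | ⟨z, hz⟩)
    · exact ⟨z, Or.inl hz⟩
    · exact ⟨z, Or.inr hz⟩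

lemma walk_edges_side {X Y : SimpleGraph ℕ} (hdisj : ∀ t, t ∈ X.support → t ∉ Y.support)
    {u v : ℕ} (p : (X ⊔ Y).Walk u v) :
    (∀ e ∈ p.edges, e ∈ X.edgeSet) ∨ (∀ e ∈ p.edges, e ∈ Y.edgeSet) := by
  induction p with
  | nil => left; simp
  | @cons a b c h q ih =>
    rcases h with hx | hy
    · rcases ih with hX | hY
      · left
        intro e he
        rw [SimpleGraph.Walk.edges_cons, List.mem_cons] at he
        rcases he with rfl | he
        · exact X.mem_edgeSet.mpr hx
        · exact hX e he
      · cases q with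
        | nil =>
          left
          intro e he
          rw [SimpleGraph.Walk.edges_cons, List.mem_cons] at he
          rcases he with rfl | he
          · exact X.mem_edgeSet.mpr hx
          · simp at he
        | @cons b' c' d' h' q' =>
          exfalso
          have h1 : s(b, c') ∈ Y.edgeSet := hY _ (by rw [SimpleGraph.Walk.edges_cons]; exact List.mem_cons_self)
          rw [SimpleGraph.mem_edgeSet] at h1
          exact hdisj b ⟨a, hx.symm⟩ ⟨c', h1⟩
    · rcases ih with hX | hY
      · cases q with
        | nil =>
          right
          intro e he
          rw [SimpleGraph.Walk.edges_cons, List.mem_cons] at he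
          rcases he with rfl | he
          · exact Y.mem_edgeSet.mpr hy
          · simp at he
        | @cons b' c' d' h' q' =>
          exfalso
          have h1 : s(b, c') ∈ X.edgeSet := hX _ (by rw [SimpleGraph.Walk.edges_cons]; exact List.mem_cons_self)
          rw [SimpleGraph.mem_edgeSet] at h1
          exact hdisj b ⟨c', h1⟩ ⟨a, hy.symm⟩
      · right
        intro e he
        rw [SimpleGraph.Walk.edges_cons, List.mem_cons] at he
        rcases he with rfl | he
        · exact Y.mem_edgeSet.mpr hy
        · exact hY e he

lemma dist_le_side_left {X Y : SimpleGraph ℕ} {u v : ℕ} (h : X.Reachable u v)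
    (hd : X.dist u v ≤ 2) : (X ⊔ Y).Reachable u v ∧ (X ⊔ Y).dist u v ≤ 2 := by
  obtain ⟨p, hp⟩ := h.exists_walk_length_eq_dist
  have hle : X ≤ X ⊔ Y := le_sup_left
  refine ⟨⟨p.mapLe hle⟩, ?_⟩
  have := SimpleGraph.dist_le (p.mapLe hle)
  rw [SimpleGraph.Walk.mapLe, SimpleGraph.Walk.length_map] at this
  omega

lemma club_union {X Y : SimpleGraph ℕ} (hX : Is2ClubGraph X) (hY : Is2ClubGraph Y)
    (hdisj : ∀ t, t ∈ X.support → t ∉ Y.support) : Is2ClubGraph (X ⊔ Y) := by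
  intro u v hr
  by_cases huv : u = v
  · subst huv; simp [SimpleGraph.dist_self]
  obtain ⟨p⟩ := hr
  rcases walk_edges_side hdisj p with hs | hs
  · have pX : X.Walk u v := p.transfer X hs
    exact (dist_le_side_left (Y := Y) ⟨pX⟩ (hX u v ⟨pX⟩)).2
  · have pY : Y.Walk u v := p.transfer Y hs
    have h2 := hY u v ⟨pY⟩
    have hrY : Y.Reachable u v := ⟨pY⟩
    obtain ⟨q, hq⟩ := hrY.exists_walk_length_eq_dist
    have hle : Y ≤ X ⊔ Y := le_sup_right
    have := SimpleGraph.dist_le (q.mapLe hle)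
    rw [SimpleGraph.Walk.mapLe, SimpleGraph.Walk.length_map] at this
    omega

lemma club_of_inducing {G : SimpleGraph ℕ} {s : Set ℕ} (h : Inducing2Club G s) :
    Is2ClubGraph (inducedOn G s) := by
  intro u v hr
  by_cases huv : u = v
  · subst huv; simp [SimpleGraph.dist_self]
  have hu : u ∈ (inducedOn G s).support := reach_mem_support_of_ne hr huv
  have hv : v ∈ (inducedOn G s).support := reach_mem_support_of_ne hr.symm (Ne.symm huv)
  obtain ⟨zu, hzu⟩ := hu
  obtain ⟨zv, hzv⟩ := hv
  exact (h u hzu.2.1 v hzv.2.1).2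

end UnionClub
section StaticLe

open SimpleGraph

lemma static_le {G : SimpleGraph ℕ} {y b : ℕ} {A : Set ℕ}
    (hGfin : G.support.Finite) (hfinA : (A ∪ {y} : Set ℕ).Finite)
    (h2club : Inducing2Club G (A ∪ {y}))
    (hb : G.Adj y b) (hbA : b ∉ A) (hby : b ≠ y)
    (hAcl : ∀ x ∈ A, ∀ z, G.Adj x z → z ≠ y → z ∈ A)
    (hbu : ∀ z, G.Adj y z → z ∉ A → z ≠ y → z = b)
    {H' : SimpleGraph ℕ} {φ' : ℕ → ℕ}
    (hc : Cert (inducedOn G {x | x ∉ A ∧ x ≠ y}) H' φ') :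
    ∃ H φ, Cert G H φ ∧
      certCost G H φ ≤ certCost (inducedOn G {x | x ∉ A ∧ x ≠ y}) H' φ' + 1 := by
  classical
  set G' := inducedOn G {x | x ∉ A ∧ x ≠ y} with hG'
  obtain ⟨N₀, hN₀⟩ := hfinA.bddAbove
  set N := N₀ + 1 with hN
  have hNlt : ∀ t ∈ A ∪ ({y} : Set ℕ), t < N := fun t ht => by
    have := hN₀ ht; omega
  set ψ : ℕ → ℕ := fun t => t + N with hψ
  have hψinj : Function.Injective ψ := fun a c h => by simp only [hψ] at h; omega
  set H₂ := Push H' ψ with hH₂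
  have hE₂ : GEquivOn H' H₂ ψ := gequiv_push H' ψ (hψinj.injOn)
  set φ₂ : ℕ → ℕ := fun t => φ' (t - N) with hφ₂
  have hφ₂ψ : ∀ p, φ₂ (ψ p) = φ' p := fun p => by simp only [hφ₂, hψ]; norm_num
  have hsupp₂ : H₂.support = ψ '' H'.support := hE₂.img.symm
  have hout : ∀ t ∈ H₂.support, t ∉ A ∪ ({y} : Set ℕ) := by
    intro t ht hmem
    rw [hsupp₂] at ht
    obtain ⟨p, hp, rfl⟩ := ht
    have := hNlt _ hmem
    simp only [hψ] at this
    omega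
  have hom₂ : ∀ ⦃a c⦄, H₂.Adj a c → G'.Adj (φ₂ a) (φ₂ c) := by
    rintro a c ⟨hne', p, q, rfl, rfl, hadj⟩
    rw [hφ₂ψ, hφ₂ψ]
    exact hc.hom hadj
  have hcoviff : ∀ e, covered H₂ φ₂ e ↔ covered H' φ' e := by
    intro e
    constructor
    · rintro ⟨a, c, ⟨hne', p, q, rfl, rfl, hadj⟩, heq⟩
      rw [hφ₂ψ, hφ₂ψ] at heq
      exact ⟨p, q, hadj, heq⟩
    · rintro ⟨p, q, hadj, heq⟩
      refine ⟨ψ p, ψ q, ⟨fun hh => hadj.ne (hψinj hh), p, q, rfl, rfl, hadj⟩, ?_⟩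
      rw [hφ₂ψ, hφ₂ψ]
      exact heq
  have huncov₂ : uncov G' H₂ φ₂ = uncov G' H' φ' := by
    ext e
    simp only [uncov, Set.mem_setOf_eq, hcoviff]
  have hclub₂ : Is2ClubGraph H₂ := hE₂.club hc.club
  have hfin₂ : H₂.support.Finite := by rw [hsupp₂]; exact hc.fin.image _
  set Club := inducedOn G (A ∪ {y}) with hClub
  have hClubSup : Club.support ⊆ A ∪ {y} := by
    rintro t ⟨z, hz⟩
    exact hz.2.1
  set H := H₂ ⊔ Club with hHdef
  set φ : ℕ → ℕ := fun t => if t ∈ A ∪ ({y} : Set ℕ) then t else φ₂ t with hφdef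
  have hφeval₂ : ∀ p ∈ H₂.support, φ p = φ₂ p := by
    intro p hp
    simp only [hφdef, if_neg (hout p hp)]
  have hφevalC : ∀ p ∈ A ∪ ({y} : Set ℕ), φ p = p := by
    intro p hp
    simp only [hφdef, if_pos hp]
  have hedgeB : ∀ ⦃p q⦄, H₂.Adj p q → (φ₂ p ∉ A ∧ φ₂ p ≠ y) ∧ (φ₂ q ∉ A ∧ φ₂ q ≠ y) := by
    intro p q h
    have h2 := hom₂ h
    exact ⟨h2.2.1, h2.2.2⟩
  have hsuppB : ∀ p ∈ H₂.support, (φ₂ p ∉ A ∧ φ₂ p ≠ y) := by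
    rintro p ⟨q, h⟩
    exact (hedgeB h).1
  have hom : ∀ ⦃p q⦄, H.Adj p q → G.Adj (φ p) (φ q) := by
    intro p q h
    rcases h with h | h
    · rw [hφeval₂ p ⟨q, h⟩, hφeval₂ q ⟨p, h.symm⟩]
      exact (hom₂ h).1
    · rw [hφevalC p h.2.1, hφevalC q h.2.2]
      exact h.1
  have hdisjsup : ∀ t, t ∈ H₂.support → t ∉ Club.support :=
    fun t ht hc2 => hout t ht (hClubSup hc2)
  have hclubH : Is2ClubGraph H := club_union hclub₂ (club_of_inducing h2club) hdisjsup
  have hfinH : H.support.Finite := by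
    rw [hHdef, support_sup]
    exact hfin₂.union (hfinA.subset hClubSup)
  have htri : ∀ t : ℕ, t ∈ A ∪ ({y} : Set ℕ) ∨ (t ∉ A ∧ t ≠ y) := by
    intro t
    by_cases h : t ∈ A ∪ ({y} : Set ℕ)
    · exact Or.inl h
    · right
      simp only [Set.mem_union, Set.mem_singleton_iff] at h
      push_neg at h
      exact h
  have hcross : ∀ x z, G.Adj x z → x ∈ A ∪ ({y} : Set ℕ) → (z ∉ A ∧ z ≠ y) →
      x = y ∧ z = b := by
    intro x z hadj hx hz
    rcases hx with hx | hx
    · exact absurd (hAcl x hx z hadj hz.2) hz.1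
    · rw [Set.mem_singleton_iff] at hx
      subst hx
      exact ⟨rfl, hbu z hadj hz.1 hz.2⟩
  -- covered H φ  ↔  corresponding coverage
  have hcovH_of_B : ∀ e, e ∈ G'.edgeSet → (covered H φ e ↔ covered H' φ' e) := by
    intro e hee
    rw [← hcoviff]
    constructor
    · rintro ⟨P, Q, hPQ, heq⟩
      rcases hPQ with h | h
      · exact ⟨P, Q, h, by rwa [hφeval₂ P ⟨Q, h⟩, hφeval₂ Q ⟨P, h.symm⟩] at heq⟩
      · exfalso
        revert hee heq
        induction e with
        | _ x z =>
          intro hee heq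
          rw [SimpleGraph.mem_edgeSet] at hee
          rw [hφevalC P h.2.1, hφevalC Q h.2.2] at heq
          rw [Sym2.eq_iff] at heq
          have hxB : x ∉ A ∧ x ≠ y := hee.2.1
          have hzB : z ∉ A ∧ z ≠ y := hee.2.2
          rcases heq with ⟨h1, h2⟩ | ⟨h1, h2⟩
          · rcases h.2.1 with hh | hh
            · exact hxB.1 (h1 ▸ hh)
            · exact hxB.2 (h1 ▸ hh)
          · rcases h.2.1 with hh | hh
            · exact hzB.1 (h1 ▸ hh)
            · exact hzB.2 (h1 ▸ hh)
    · rintro ⟨P, Q, hPQ, heq⟩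
      exact ⟨P, Q, Or.inl hPQ, by rwa [hφeval₂ P ⟨Q, hPQ⟩, hφeval₂ Q ⟨P, hPQ.symm⟩]⟩
  have hybuncov : ¬ covered H φ s(y, b) := by
    rintro ⟨P, Q, hPQ, heq⟩
    rw [Sym2.eq_iff] at heq
    rcases hPQ with h | h
    · have h1 := (hsuppB P ⟨Q, h⟩)
      have h2 := (hsuppB Q ⟨P, h.symm⟩)
      rw [hφeval₂ P ⟨Q, h⟩, hφeval₂ Q ⟨P, h.symm⟩] at heq
      rcases heq with ⟨ha, hb'⟩ | ⟨ha, hb'⟩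
      · exact h1.2 ha
      · exact h2.2 hb'
    · rw [hφevalC P h.2.1, hφevalC Q h.2.2] at heq
      rcases heq with ⟨ha, hb'⟩ | ⟨ha, hb'⟩
      · rcases h.2.2 with hh | hh
        · exact hbA (hb' ▸ hh)
        · exact hby (hb' ▸ hh)
      · rcases h.2.1 with hh | hh
        · exact hbA (ha ▸ hh)
        · exact hby (ha ▸ hh)
  have huncovG : uncov G H φ = insert s(y, b) (uncov G' H' φ') := by
    ext e
    constructor
    · intro he
      revert he
      induction e with
      | _ x z =>
        intro he
        obtain ⟨hee, hnc⟩ := he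
        rw [SimpleGraph.mem_edgeSet] at hee
        rcases htri x with hx | hx
        · rcases htri z with hz | hz
          · exfalso
            exact hnc ⟨x, z, Or.inr ⟨hee, hx, hz⟩, by rw [hφevalC x hx, hφevalC z hz]⟩
          · obtain ⟨rfl, rfl⟩ := hcross x z hee hx hz
            exact Set.mem_insert _ _
        · rcases htri z with hz | hz
          · obtain ⟨rfl, rfl⟩ := hcross z x hee.symm hz hx
            rw [Sym2.eq_swap]
            exact Set.mem_insert _ _
          · refine Set.mem_insert_of_mem _ ⟨?_, ?_⟩
            · exact (inducedOn G _).mem_edgeSet.mpr ⟨hee, hx, hz⟩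
            · intro hcv
              exact hnc ((hcovH_of_B s(x, z)
                ((inducedOn G _).mem_edgeSet.mpr ⟨hee, hx, hz⟩)).2 hcv)
    · intro he
      rcases Set.mem_insert_iff.mp he with rfl | he
      · exact ⟨G.mem_edgeSet.mpr hb, hybuncov⟩
      · obtain ⟨hee, hnc⟩ := he
        have heG : e ∈ G.edgeSet := by
          revert hee
          induction e with
          | _ x z =>
            intro hee
            rw [SimpleGraph.mem_edgeSet] at hee ⊢
            exact hee.1
        exact ⟨heG, fun hcv => hnc ((hcovH_of_B e hee).1 hcv)⟩
  -- cardinalities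
  have hfinuncov' : (uncov G' H' φ').Finite := by
    refine Set.Finite.subset (edgeSet_finite_of_support_s7 hGfin) ?_
    intro e he
    have := he.1
    revert this
    induction e with
    | _ x z =>
      intro h2
      rw [SimpleGraph.mem_edgeSet] at h2 ⊢
      exact h2.1
  have hybnot : s(y, b) ∉ uncov G' H' φ' := by
    intro hmem
    have := hmem.1
    rw [SimpleGraph.mem_edgeSet] at this
    exact this.2.1.2 rfl
  have huncard : (uncov G H φ).ncard = (uncov G' H' φ').ncard + 1 := by
    rw [huncovG, Set.ncard_insert_of_notMem hybnot hfinuncov']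
  -- cost1 accounting
  have hsupp_eq : H.support = H₂.support ∪ Club.support := by
    rw [hHdef]; exact support_sup _ _
  have hdisj' : Disjoint H₂.support Club.support :=
    Set.disjoint_left.mpr hdisjsup
  have hClubFin : Club.support.Finite := hfinA.subset hClubSup
  have hn1 : H.support.ncard = H₂.support.ncard + Club.support.ncard := by
    rw [hsupp_eq]
    exact Set.ncard_union_eq hdisj' hfin₂ hClubFin
  have himg_eq : φ '' H.support = (φ₂ '' H₂.support) ∪ Club.support := by
    rw [hsupp_eq, Set.image_union]
    congr 1
    · exact Set.image_congr hφeval₂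
    · rw [show φ '' Club.support = id '' Club.support from
        Set.image_congr (fun p hp => hφevalC p (hClubSup hp))]
      exact Set.image_id _
  have hdisjimg : Disjoint (φ₂ '' H₂.support) Club.support := by
    rw [Set.disjoint_left]
    rintro t ⟨p, hp, rfl⟩ htc
    rcases hClubSup htc with hh | hh
    · exact (hsuppB p hp).1 hh
    · exact (hsuppB p hp).2 hh
  have hn2 : (φ '' H.support).ncard = (φ₂ '' H₂.support).ncard + Club.support.ncard := by
    rw [himg_eq]
    exact Set.ncard_union_eq hdisjimg (hfin₂.image _) hClubFin
  have hn3 : H₂.support.ncard = H'.support.ncard := by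
    rw [hsupp₂]
    exact Set.ncard_image_of_injOn (hψinj.injOn)
  have hn4 : (φ₂ '' H₂.support).ncard = (φ' '' H'.support).ncard := by
    rw [hsupp₂, Set.image_image]
    congr 1
    exact Set.image_congr (fun p _ => hφ₂ψ p)
  refine ⟨H, φ, ⟨hom, hclubH, hfinH⟩, ?_⟩
  rw [certCost, certCost, huncard, hn1, hn2, hn3, hn4]
  omega

end StaticLe
section StaticGe

open SimpleGraph

/-- Quotient-style graph used in the lower-bound argument. -/
def quotGraph (H : SimpleGraph ℕ) (r : ℕ → ℕ) (P : ℕ → Prop) : SimpleGraph ℕ where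
  Adj u v := u ≠ v ∧ ∃ u' v', r u' = u ∧ r v' = v ∧ P u' ∧ P v' ∧ H.Adj u' v'
  symm := by
    constructor
    rintro u v ⟨hne, u', v', h1, h2, h3, h4, h5⟩
    exact ⟨hne.symm, v', u', h2, h1, h4, h3, h5.symm⟩
  loopless := ⟨fun u h => h.1 rfl⟩

lemma quotGraph_adj {H : SimpleGraph ℕ} {r : ℕ → ℕ} {P : ℕ → Prop} {u v : ℕ} :
    (quotGraph H r P).Adj u v ↔
      u ≠ v ∧ ∃ u' v', r u' = u ∧ r v' = v ∧ P u' ∧ P v' ∧ H.Adj u' v' := Iff.rfl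

lemma static_ge {G : SimpleGraph ℕ} {y b aa w : ℕ} {A : Set ℕ}
    (hGfin : G.support.Finite)
    (haA : aa ∈ A) (hwA : w ∈ A)
    (hadj_yw : G.Adj y w) (hadj_wa : G.Adj w aa) (hnadj_ya : ¬ G.Adj y aa)
    (hb : G.Adj y b) (hbA : b ∉ A) (hby : b ≠ y)
    (hAcl : ∀ x ∈ A, ∀ z, G.Adj x z → z ≠ y → z ∈ A)
    (hbu : ∀ z, G.Adj y z → z ∉ A → z ≠ y → z = b)
    {H : SimpleGraph ℕ} {φ : ℕ → ℕ} (hc : Cert G H φ) :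
    ∃ H', Cert (inducedOn G {x | x ∉ A ∧ x ≠ y}) H' φ ∧
      certCost (inducedOn G {x | x ∉ A ∧ x ≠ y}) H' φ + 1 ≤ certCost G H φ := by
  classical
  set G' := inducedOn G {x | x ∉ A ∧ x ≠ y} with hG'def
  set Rel : ℕ → ℕ → Prop := fun c₁ c₂ =>
    φ c₁ = b ∧ φ c₂ = b ∧ ∃ mh, (φ mh ∈ A ∨ φ mh = y) ∧ H.Adj mh c₁ ∧ H.Adj mh c₂ with hRel
  set E : ℕ → ℕ → Prop := Relation.EqvGen Rel with hE
  have hE_b : ∀ {c₁ c₂}, E c₁ c₂ → c₁ = c₂ ∨ (φ c₁ = b ∧ φ c₂ = b) := by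
    intro c₁ c₂ h
    induction h with
    | rel x z h => exact Or.inr ⟨h.1, h.2.1⟩
    | refl x => exact Or.inl rfl
    | symm x z h ih =>
      rcases ih with rfl | ⟨h1, h2⟩
      · exact Or.inl rfl
      · exact Or.inr ⟨h2, h1⟩
    | trans x z t h1 h2 ih1 ih2 =>
      rcases ih1 with rfl | ⟨ha1, ha2⟩
      · exact ih2
      · rcases ih2 with rfl | ⟨hb1, hb2⟩
        · exact Or.inr ⟨ha1, ha2⟩
        · exact Or.inr ⟨ha1, hb2⟩
  have hE_reach : ∀ {c₁ c₂}, E c₁ c₂ → H.Reachable c₁ c₂ := by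
    intro c₁ c₂ h
    induction h with
    | rel x z h =>
      obtain ⟨_, _, mh, _, h1, h2⟩ := h
      exact (h1.symm.reachable).trans h2.reachable
    | refl x => exact SimpleGraph.Reachable.refl x
    | symm x z h ih => exact ih.symm
    | trans x z t h1 h2 ih1 ih2 => exact ih1.trans ih2
  have hE_class : ∀ {c₁ c₂}, E c₁ c₂ → {t | E c₁ t} = {t | E c₂ t} := by
    intro c₁ c₂ h
    ext t
    constructor
    · intro ht
      exact Relation.EqvGen.trans _ _ _ (Relation.EqvGen.symm _ _ h) ht
    · intro ht
      exact Relation.EqvGen.trans _ _ _ h ht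
  set r : ℕ → ℕ := fun c => if φ c = b then sInf {t | E c t} else c with hr
  have hrE : ∀ c, φ c = b → E c (r c) := by
    intro c hcb
    have hne : {t | E c t}.Nonempty := ⟨c, Relation.EqvGen.refl c⟩
    have := Nat.sInf_mem hne
    simp only [hr, if_pos hcb]
    exact this
  have hrφ : ∀ c, φ (r c) = φ c := by
    intro c
    by_cases hcb : φ c = b
    · rcases hE_b (hrE c hcb) with heq | ⟨h1, h2⟩
      · rw [← heq]
      · rw [h2, hcb]
    · simp only [hr, if_neg hcb]
  have hrcongr : ∀ {c₁ c₂}, E c₁ c₂ → r c₁ = r c₂ := by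
    intro c₁ c₂ h
    rcases hE_b h with rfl | ⟨h1, h2⟩
    · rfl
    · simp only [hr, if_pos h1, if_pos h2, hE_class h]
  have hridem : ∀ c, r (r c) = r c := by
    intro c
    by_cases hcb : φ c = b
    · exact (hrcongr (hrE c hcb)).symm
    · simp only [hr, if_neg hcb]
  have hrreach : ∀ c, H.Reachable c (r c) := by
    intro c
    by_cases hcb : φ c = b
    · exact hE_reach (hrE c hcb)
    · simp only [hr, if_neg hcb]
      exact SimpleGraph.Reachable.refl c
  set P : ℕ → Prop := fun t => φ t ∉ A ∧ φ t ≠ y with hP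
  set H' := quotGraph H r P with hH'
  -- crossing characterisation
  have hcross : ∀ xm zc, G.Adj xm zc → (xm ∈ A ∨ xm = y) → (zc ∉ A ∧ zc ≠ y) →
      xm = y ∧ zc = b := by
    intro xm zc hadj hx hz
    rcases hx with hx | hx
    · exact absurd (hAcl xm hx zc hadj hz.2) hz.1
    · subst hx
      exact ⟨rfl, hbu zc hadj hz.1 hz.2⟩
  have htri : ∀ t : ℕ, (t ∈ A ∨ t = y) ∨ (t ∉ A ∧ t ≠ y) := by
    intro t
    by_cases h1 : t ∈ A
    · exact Or.inl (Or.inl h1)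
    by_cases h2 : t = y
    · exact Or.inl (Or.inr h2)
    · exact Or.inr ⟨h1, h2⟩
  -- cert fields for H'
  have hom' : ∀ ⦃u v⦄, H'.Adj u v → G'.Adj (φ u) (φ v) := by
    rintro u v ⟨hne, u', v', hru, hrv, hPu, hPv, hadj⟩
    have e1 : φ u = φ u' := by rw [← hru, hrφ]
    have e2 : φ v = φ v' := by rw [← hrv, hrφ]
    refine ⟨?_, ?_, ?_⟩
    · rw [e1, e2]; exact hc.hom hadj
    · rw [e1]; exact hPu
    · rw [e2]; exact hPv
  have hsupfix : ∀ u ∈ H'.support, r u = u ∧ (φ u ∉ A ∧ φ u ≠ y) := by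
    rintro u ⟨v, ⟨hne, u', v', hru, hrv, hPu, hPv, hadj⟩⟩
    constructor
    · rw [← hru, hridem]
    · have e1 : φ u = φ u' := by rw [← hru, hrφ]
      rw [e1]
      exact hPu
  have hlift : ∀ {u v : ℕ}, H'.Walk u v → H.Reachable u v := by
    intro u v p
    induction p with
    | nil => exact SimpleGraph.Reachable.refl _
    | @cons x z t h q ih =>
      obtain ⟨hne, u', v', hru, hrv, hPu, hPv, hadj⟩ := h
      have r1 : H.Reachable x u' := by rw [← hru]; exact (hrreach u').symm
      have r2 : H.Reachable v' z := by rw [← hrv]; exact hrreach v'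
      exact ((r1.trans hadj.reachable).trans r2).trans ih
  have hclub' : Is2ClubGraph H' := by
    intro u v hrch
    by_cases huv : u = v
    · subst huv; simp [SimpleGraph.dist_self]
    have hu := reach_mem_support_of_ne hrch huv
    have hv := reach_mem_support_of_ne hrch.symm (Ne.symm huv)
    obtain ⟨p⟩ := hrch
    have hreachH : H.Reachable u v := hlift p
    have hd := hc.club _ _ hreachH
    rcases reach_dist_le_two_cases hreachH hd with heq | hadj | ⟨q, h1, h2⟩
    · exact absurd heq huv
    · refine le_trans (dist_le_one_of_adj ?_) one_le_two
      exact ⟨huv, u, v, (hsupfix u hu).1, (hsupfix v hv).1, (hsupfix u hu).2,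
        (hsupfix v hv).2, hadj⟩
    · rcases htri (φ q) with hqL | hqB
      · -- q maps into the club side: u and v are merged copies of b
        exfalso
        have c1 := hcross (φ q) (φ u) (hc.hom h1.symm) hqL (hsupfix u hu).2
        have c2 := hcross (φ q) (φ v) (hc.hom h2) hqL (hsupfix v hv).2
        have hrel : Rel u v := ⟨c1.2, c2.2, q, hqL, h1.symm, h2⟩
        have := hrcongr (Relation.EqvGen.rel _ _ hrel)
        rw [(hsupfix u hu).1, (hsupfix v hv).1] at this
        exact huv this
      · by_cases h1q : r q = u
        · refine le_trans (dist_le_one_of_adj ?_) one_le_two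
          exact ⟨huv, q, v, h1q, (hsupfix v hv).1, hqB, (hsupfix v hv).2, h2⟩
        · by_cases h2q : r q = v
          · refine le_trans (dist_le_one_of_adj ?_) one_le_two
            exact ⟨huv, u, q, (hsupfix u hu).1, h2q, (hsupfix u hu).2, hqB, h1⟩
          · refine dist_le_two_of_mid
              (⟨fun hh => h1q hh.symm, u, q, (hsupfix u hu).1, rfl, (hsupfix u hu).2, hqB, h1⟩ :
                H'.Adj u (r q))
              (⟨h2q, q, v, rfl, (hsupfix v hv).1, hqB, (hsupfix v hv).2, h2⟩ : H'.Adj (r q) v)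
  -- support bound
  set S := H.support with hS
  set T := {t | t ∈ H.support ∧ (φ t ∉ A ∧ φ t ≠ y)} with hT
  have hTS : T ⊆ S := fun t ht => ht.1
  have hfinS : S.Finite := hc.fin
  have hfinT : T.Finite := hfinS.subset hTS
  have hsupp' : H'.support ⊆ r '' T := by
    rintro u ⟨v, ⟨hne, u', v', hru, hrv, hPu, hPv, hadj⟩⟩
    exact ⟨u', ⟨⟨v', hadj⟩, hPu⟩, hru⟩
  have hfin' : H'.support.Finite := (hfinT.image r).subset hsupp'
  have hcert' : Cert G' H' φ := ⟨hom', hclub', hfin'⟩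
  -- counting
  have hmono := cost1_mono (φ := φ) (hfinT.image r) hsupp'
  have himgrT : φ '' (r '' T) = φ '' T := by
    rw [Set.image_image]
    exact Set.image_congr (fun t _ => hrφ t)
  have hrT_le : (r '' T).ncard ≤ T.ncard := Set.ncard_image_le hfinT
  have hST : S = T ∪ (S \ T) := by
    rw [Set.union_diff_cancel hTS]
  have he1 : (φ '' S).ncard ≤ (φ '' T).ncard + (φ '' (S \ T)).ncard := by
    calc (φ '' S).ncard = ((φ '' T) ∪ (φ '' (S \ T))).ncard := by
          rw [← Set.image_union, ← hST]
      _ ≤ _ := Set.ncard_union_le _ _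
  have he2 : (S \ T).ncard + T.ncard = S.ncard := Set.ncard_diff_add_ncard_of_subset hTS hfinS
  have he3 : (φ '' T).ncard ≤ T.ncard := Set.ncard_image_le hfinT
  have he4 : (φ '' (S \ T)).ncard ≤ (S \ T).ncard := Set.ncard_image_le (hfinS.diff)
  have hiH' : (φ '' H'.support).ncard ≤ H'.support.ncard := Set.ncard_image_le hfin'
  rw [himgrT] at hmono
  have key1 : H'.support.ncard - (φ '' H'.support).ncard ≤ T.ncard - (φ '' T).ncard := by
    omega
  have key2 : (T.ncard - (φ '' T).ncard) + ((S \ T).ncard - (φ '' (S \ T)).ncard) ≤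
      S.ncard - (φ '' S).ncard := by
    omega
  -- uncovered edges: the G'-uncovered ones inject into the G-uncovered ones
  have hG'sub : ∀ e, e ∈ G'.edgeSet → e ∈ G.edgeSet := by
    intro e
    induction e with
    | _ x z =>
      intro h
      rw [SimpleGraph.mem_edgeSet] at h ⊢
      exact h.1
  have hsubuncov : uncov G' H' φ ⊆ uncov G H φ := by
    rintro e ⟨heG', hnc'⟩
    refine ⟨hG'sub e heG', ?_⟩
    rintro ⟨u', v', hadj, heq⟩
    -- endpoints of e lie in B
    have hPu : φ u' ∉ A ∧ φ u' ≠ y := by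
      revert heG' heq
      induction e with
      | _ x z =>
        intro heG' heq
        rw [SimpleGraph.mem_edgeSet] at heG'
        rw [Sym2.eq_iff] at heq
        rcases heq with ⟨h1, h2⟩ | ⟨h1, h2⟩
        · rw [h1]; exact heG'.2.1
        · rw [h1]; exact heG'.2.2
    have hPv : φ v' ∉ A ∧ φ v' ≠ y := by
      revert heG' heq
      induction e with
      | _ x z =>
        intro heG' heq
        rw [SimpleGraph.mem_edgeSet] at heG'
        rw [Sym2.eq_iff] at heq
        rcases heq with ⟨h1, h2⟩ | ⟨h1, h2⟩
        · rw [h2]; exact heG'.2.2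
        · rw [h2]; exact heG'.2.1
    have hrne : r u' ≠ r v' := by
      intro hreq
      by_cases hub : φ u' = b <;> by_cases hvb : φ v' = b
      · -- both b : e would be a loop in G'
        have : φ u' = φ v' := by rw [hub, hvb]
        revert heq
        induction e with
        | _ x z =>
          intro heq
          rw [Sym2.eq_iff] at heq
          have hGadj : G'.Adj x z := G'.mem_edgeSet.mp heG'
          rcases heq with ⟨h1, h2⟩ | ⟨h1, h2⟩
          · exact G'.loopless.irrefl x (by rw [← h1, this, h2] at hGadj ⊢; exact hGadj)
          · exact G'.loopless.irrefl x (by rw [← h2, ← this, h1] at hGadj ⊢; exact hGadj)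
      · rw [hr] at hreq
        simp only [if_pos hub, if_neg hvb] at hreq
        have : φ (r u') = φ u' := hrφ u'
        rw [hr] at this
        simp only [if_pos hub] at this
        rw [hreq] at this
        exact hvb (this ▸ hub)
      · rw [hr] at hreq
        simp only [if_neg hub, if_pos hvb] at hreq
        have : φ (r v') = φ v' := hrφ v'
        rw [hr] at this
        simp only [if_pos hvb] at this
        rw [← hreq] at this
        exact hub (this ▸ hvb)
      · rw [hr] at hreq
        simp only [if_neg hub, if_neg hvb] at hreq
        rw [hreq] at hadj
        exact H.loopless.irrefl _ hadj
    refine hnc' ⟨r u', r v', ⟨hrne, u', v', rfl, rfl, hPu, hPv, hadj⟩, ?_⟩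
    rw [hrφ, hrφ]
    exact heq
  have hfinuncovG : (uncov G H φ).Finite :=
    (edgeSet_finite_of_support_s7 hGfin).subset uncov_subset
  have hfinuncovG' : (uncov G' H' φ).Finite := hfinuncovG.subset hsubuncov
  -- helper: an uncovered G-edge outside G' gives the budget
  have hbudget : ∀ e₀, e₀ ∈ uncov G H φ → e₀ ∉ G'.edgeSet →
      (uncov G' H' φ).ncard + 1 ≤ (uncov G H φ).ncard := by
    intro e₀ he₀ hne₀
    have hnotmem : e₀ ∉ uncov G' H' φ := fun h => hne₀ h.1
    have hins : insert e₀ (uncov G' H' φ) ⊆ uncov G H φ := by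
      intro t ht
      rcases Set.mem_insert_iff.mp ht with rfl | ht
      · exact he₀
      · exact hsubuncov ht
    calc (uncov G' H' φ).ncard + 1 = (insert e₀ (uncov G' H' φ)).ncard :=
          (Set.ncard_insert_of_notMem hnotmem hfinuncovG').symm
      _ ≤ _ := Set.ncard_le_ncard hins hfinuncovG
  have horient : ∀ {xx zz : ℕ}, covered H φ s(xx, zz) →
      ∃ Pc Qc, H.Adj Pc Qc ∧ φ Pc = xx ∧ φ Qc = zz := by
    rintro xx zz ⟨Pc, Qc, hPQ, heq⟩
    rw [Sym2.eq_iff] at heq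
    rcases heq with ⟨h1, h2⟩ | ⟨h1, h2⟩
    · exact ⟨Pc, Qc, hPQ, h1, h2⟩
    · exact ⟨Qc, Pc, hPQ.symm, h2, h1⟩
  refine ⟨H', hcert', ?_⟩
  by_cases hybu : covered H φ s(y, b)
  · -- y-b is covered
    by_cases hinjL : Set.InjOn φ (S \ T)
    · by_cases hexu : ∃ e₀ ∈ uncov G H φ, e₀ ∉ G'.edgeSet
      · obtain ⟨e₀, he₀, hne₀⟩ := hexu
        have hcount := hbudget e₀ he₀ hne₀
        rw [certCost, certCost, ← hS]
        omega
      · -- all uncovered edges are G'-edges : derive a contradiction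
        exfalso
        push_neg at hexu
        have hcovered : ∀ e, e ∈ G.edgeSet → e ∉ G'.edgeSet → covered H φ e := by
          intro e heG hneG'
          by_contra hnc
          exact hneG' (hexu e ⟨heG, hnc⟩)
        have hyw_cov : covered H φ s(y, w) :=
          hcovered _ (G.mem_edgeSet.mpr hadj_yw)
            (fun h => (G'.mem_edgeSet.mp h).2.1.2 rfl)
        have hwa_cov : covered H φ s(w, aa) :=
          hcovered _ (G.mem_edgeSet.mpr hadj_wa)
            (fun h => (G'.mem_edgeSet.mp h).2.1.1 hwA)
        obtain ⟨Pyw, Qyw, hadj1, hφ1, hφ2⟩ := horient hyw_cov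
        obtain ⟨Pwa, Qwa, hadj2, hφ3, hφ4⟩ := horient hwa_cov
        obtain ⟨Pyb, Qyb, hadj3, hφ5, hφ6⟩ := horient hybu
        have hmem1 : Pyw ∈ S \ T := ⟨⟨_, hadj1⟩, fun ht => ht.2.2 hφ1⟩
        have hmem2 : Pyb ∈ S \ T := ⟨⟨_, hadj3⟩, fun ht => ht.2.2 hφ5⟩
        have hmem3 : Qyw ∈ S \ T := ⟨⟨_, hadj1.symm⟩, fun ht => ht.2.1 (hφ2 ▸ hwA)⟩
        have hmem4 : Pwa ∈ S \ T := ⟨⟨_, hadj2⟩, fun ht => ht.2.1 (hφ3 ▸ hwA)⟩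
        have hPP : Pyw = Pyb := hinjL hmem1 hmem2 (by rw [hφ1, hφ5])
        have hQQ : Qyw = Pwa := hinjL hmem3 hmem4 (by rw [hφ2, hφ3])
        -- walk Qwa - Pwa - Pyw - Qyb
        have hreach : H.Reachable Qwa Qyb := by
          rw [hQQ] at hadj1
          rw [hPP] at hadj1
          exact ((hadj2.symm.reachable).trans (hadj1.symm.reachable)).trans hadj3.reachable
        have hd := hc.club _ _ hreach
        rcases reach_dist_le_two_cases hreach hd with heq | hadj | ⟨Z, hz1, hz2⟩
        · rw [heq] at hφ4
          rw [hφ6] at hφ4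
          exact hbA (hφ4 ▸ haA)
        · have := hc.hom hadj
          rw [hφ4, hφ6] at this
          exact hbA (hAcl aa haA b this hby)
        · have g1 := hc.hom hz1
          have g2 := hc.hom hz2
          rw [hφ4] at g1
          rw [hφ6] at g2
          by_cases hzy : φ Z = y
          · rw [hzy] at g1
            exact hnadj_ya g1.symm
          · have hZA : φ Z ∈ A := hAcl aa haA (φ Z) g1 hzy
            exact hbA (hAcl (φ Z) hZA b g2 hby)
    · -- φ is not injective on the club-side copies
      have himgne : (φ '' (S \ T)).ncard ≠ (S \ T).ncard := by
        intro h
        exact hinjL (injOn_of_ncard_image (hfinS.diff) h)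
      have hstrict : (φ '' (S \ T)).ncard + 1 ≤ (S \ T).ncard := by omega
      have hcount : (uncov G' H' φ).ncard ≤ (uncov G H φ).ncard :=
        Set.ncard_le_ncard hsubuncov hfinuncovG
      rw [certCost, certCost, ← hS]
      omega
  · -- y-b is uncovered
    have hybG : s(y, b) ∈ uncov G H φ := ⟨G.mem_edgeSet.mpr hb, hybu⟩
    have hybnG' : s(y, b) ∉ G'.edgeSet := fun h => (G'.mem_edgeSet.mp h).2.1.2 rfl
    have hcount := hbudget _ hybG hybnG'
    rw [certCost, certCost, ← hS]
    omega

end StaticGe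
section Main

open SimpleGraph

lemma opt_set_nonempty (K : SimpleGraph ℕ) (hfin : K.support.Finite) :
    {k | ∃ l H, l.length = k ∧ OpsApply l K H ∧ Is2ClubGraph H}.Nonempty := by
  have hcert : Cert K ⊥ id := by
    refine ⟨?_, ?_, ?_⟩
    · intro p q h
      simp at h
    · intro u v hr
      rw [SimpleGraph.reachable_bot] at hr
      subst hr
      simp [SimpleGraph.dist_self]
    · refine Set.finite_empty.subset ?_
      rintro t ⟨z, h⟩
      simp at h
  obtain ⟨l, H₂, hlen, happ, hclub⟩ := ops_of_cert hcert hfin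
  exact ⟨l.length, l, H₂, rfl, happ, hclub⟩

theorem stmt7 (G : SimpleGraph ℕ) (hfin : G.support.Finite) (y : ℕ) (A : Set ℕ)
    (hA : ∃ a ∈ A, a ≠ y ∧ A = {x | (inducedOn G {z | z ≠ y}).Reachable a x})
    (h2club : Inducing2Club G (A ∪ {y}))
    (hdist : ∃ a ∈ A, (inducedOn G (A ∪ {y})).dist y a = 2)
    (hB : Set.ncard (G.neighborSet y ∩ {x | x ∉ A ∧ x ≠ y}) = 1) :
    twoCcedvs G = twoCcedvs (inducedOn G {x | x ∉ A ∧ x ≠ y}) + 1 := by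
  classical
  obtain ⟨a₀, ha₀A, ha₀y, hAeq⟩ := hA
  -- y is not in A
  have hedge_y : ∀ x, ¬ (inducedOn G {z | z ≠ y}).Adj y x := fun x h => h.2.1 rfl
  have hyA : y ∉ A := by
    intro hy
    rw [hAeq, Set.mem_setOf_eq] at hy
    obtain ⟨p⟩ := hy.symm
    cases p with
    | nil => exact ha₀y rfl
    | cons h q => exact hedge_y _ h
  -- A is closed under adjacency away from y
  have hAcl : ∀ x ∈ A, ∀ z, G.Adj x z → z ≠ y → z ∈ A := by
    intro x hx z hadj hzy
    have hxy : x ≠ y := fun h => hyA (h ▸ hx)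
    rw [hAeq, Set.mem_setOf_eq] at hx ⊢
    exact hx.trans (SimpleGraph.Adj.reachable ⟨hadj, hxy, hzy⟩)
  -- the unique neighbour b of y outside A
  obtain ⟨b, hbset⟩ := Set.ncard_eq_one.mp hB
  have hbmem : b ∈ G.neighborSet y ∩ {x | x ∉ A ∧ x ≠ y} := by
    rw [hbset]; rfl
  have hb : G.Adj y b := hbmem.1
  have hbA : b ∉ A := hbmem.2.1
  have hby : b ≠ y := hbmem.2.2
  have hbu : ∀ z, G.Adj y z → z ∉ A → z ≠ y → z = b := by
    intro z h1 h2 h3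
    have : z ∈ G.neighborSet y ∩ {x | x ∉ A ∧ x ≠ y} := ⟨h1, h2, h3⟩
    rw [hbset] at this
    exact this
  -- the vertex aa at distance two and the midpoint w
  obtain ⟨aa, haaA, hdaa⟩ := hdist
  have hreach_ya : (inducedOn G (A ∪ {y})).Reachable y aa := by
    by_contra h
    rw [SimpleGraph.dist_eq_zero_of_not_reachable h] at hdaa
    exact absurd hdaa (by norm_num)
  obtain ⟨p, hp⟩ := hreach_ya.exists_walk_length_eq_dist
  rw [hdaa] at hp
  have hwdata : ∃ w, (inducedOn G (A ∪ {y})).Adj y w ∧ (inducedOn G (A ∪ {y})).Adj w aa := by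
    cases p with
    | nil => simp at hp
    | cons h q =>
      cases q with
      | nil => simp at hp
      | cons h2 q2 =>
        cases q2 with
        | nil => exact ⟨_, h, h2⟩
        | cons h3 q3 => simp [SimpleGraph.Walk.length_cons] at hp
  obtain ⟨w, hyw, hwa⟩ := hwdata
  have hwy : w ≠ y := hyw.ne'
  have hwA : w ∈ A := by
    rcases hyw.2.2 with h | h
    · exact h
    · exact absurd h hwy
  have hadj_yw : G.Adj y w := hyw.1
  have hadj_wa : G.Adj w aa := hwa.1
  have hnadj_ya : ¬ G.Adj y aa := by
    intro h
    have hadj : (inducedOn G (A ∪ {y})).Adj y aa := ⟨h, Or.inr rfl, Or.inl haaA⟩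
    have := dist_le_one_of_adj hadj
    omega
  -- finiteness facts
  have hAfin : A.Finite := by
    refine (hfin.union (Set.finite_singleton a₀)).subset ?_
    intro x hx
    by_cases hxa : x = a₀
    · exact Or.inr (by simp [hxa])
    · rw [hAeq, Set.mem_setOf_eq] at hx
      have hxs := reach_mem_support_of_ne hx.symm hxa
      obtain ⟨z, hz⟩ := hxs
      exact Or.inl ⟨z, hz.1⟩
  have hfinA : (A ∪ {y} : Set ℕ).Finite := hAfin.union (Set.finite_singleton y)
  have hfinG' : (inducedOn G {x | x ∉ A ∧ x ≠ y}).support.Finite := by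
    refine hfin.subset ?_
    rintro t ⟨z, hz⟩
    exact ⟨z, hz.1⟩
  -- lower bound : twoCcedvs G' + 1 ≤ twoCcedvs G
  have hGmem : twoCcedvs G ∈
      {k | ∃ l H, l.length = k ∧ OpsApply l G H ∧ Is2ClubGraph H} :=
    Nat.sInf_mem (opt_set_nonempty G hfin)
  obtain ⟨l, Hf, hlen, happ, hclubf⟩ := hGmem
  obtain ⟨H₀, φ, hcert, hcost⟩ := cert_of_ops happ hfin hclubf
  rw [hlen] at hcost
  obtain ⟨H', hcert', hle'⟩ := static_ge hfin haaA hwA hadj_yw hadj_wa hnadj_ya hb hbA hby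
    hAcl hbu hcert
  obtain ⟨l', H₂, hlen', happ', hclub'⟩ := ops_of_cert hcert' hfinG'
  have hlow : twoCcedvs (inducedOn G {x | x ∉ A ∧ x ≠ y}) ≤ l'.length :=
    Nat.sInf_le ⟨l', H₂, rfl, happ', hclub'⟩
  -- upper bound : twoCcedvs G ≤ twoCcedvs G' + 1
  have hG'mem : twoCcedvs (inducedOn G {x | x ∉ A ∧ x ≠ y}) ∈
      {k | ∃ l H, l.length = k ∧
        OpsApply l (inducedOn G {x | x ∉ A ∧ x ≠ y}) H ∧ Is2ClubGraph H} :=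
    Nat.sInf_mem (opt_set_nonempty _ hfinG')
  obtain ⟨l₂, Hf₂, hlen₂, happ₂, hclubf₂⟩ := hG'mem
  obtain ⟨H₀₂, φ₂, hcert₂, hcost₂⟩ := cert_of_ops happ₂ hfinG' hclubf₂
  rw [hlen₂] at hcost₂
  obtain ⟨H₃, φ₃, hcert₃, hcost₃⟩ := static_le hfin hfinA h2club hb hbA hby hAcl hbu hcert₂
  obtain ⟨l₃, H₄, hlen₃, happ₃, hclub₃⟩ := ops_of_cert hcert₃ hfin
  have hupp : twoCcedvs G ≤ l₃.length :=
    Nat.sInf_le ⟨l₃, H₄, rfl, happ₃, hclub₃⟩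
  omega

end Main
end

section
/- In the cycle C_n on n vertices (n ≥ 6), any sequence of vertex splits that turns C_n into a disjoint union of 2-clubs must split at least ⌈n/2⌉ distinct vertices; in particular, for n = 6a, at least 3a vertices of the cycle must be split. -/
open SimpleGraph

lemma mod_sub (n a : ℕ) (h1 : n ≤ a) (h2 : a < 2*n) : a % n = a - n := by
  rw [Nat.mod_eq_sub_mod h1, Nat.mod_eq_of_lt (by omega)]

lemma cycle_adj_iff (n x y : ℕ) :
    (cycleG n).Adj x y ↔ x ≠ y ∧ ((x < n ∧ y = (x+1)%n) ∨ (y < n ∧ x = (y+1)%n)) := by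
  simp [cycleG, SimpleGraph.fromRel_adj]

lemma cycle_adj_cast {n x y : ℕ} (h : (cycleG n).Adj x y) :
    ((y : ZMod n) = x + 1 ∨ (x : ZMod n) = y + 1) := by
  rw [cycle_adj_iff] at h
  rcases h.2 with ⟨_, rfl⟩ | ⟨_, rfl⟩
  · left; rw [ZMod.natCast_mod]; push_cast; ring
  · right; rw [ZMod.natCast_mod]; push_cast; ring

lemma cycle_adj_succ (n i : ℕ) (hn : 6 ≤ n) (hi : i < n) :
    (cycleG n).Adj i ((i+1)%n) := by
  rw [cycle_adj_iff]
  refine ⟨?_, Or.inl ⟨hi, rfl⟩⟩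
  rcases Nat.lt_or_ge (i+1) n with h|h
  · rw [Nat.mod_eq_of_lt h]; omega
  · rw [mod_sub n _ h (by omega)]; omega

lemma cycle_adj_pred (n i : ℕ) (hn : 6 ≤ n) (hi : i < n) :
    (cycleG n).Adj i ((i + (n-1)) % n) := by
  rw [cycle_adj_iff]
  have hlt : (i + (n-1)) % n < n := Nat.mod_lt _ (by omega)
  refine ⟨?_, Or.inr ⟨hlt, ?_⟩⟩
  · rcases Nat.lt_or_ge (i + (n-1)) n with h|h
    · rw [Nat.mod_eq_of_lt h]; omega
    · rw [mod_sub n _ h (by omega)]; omega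
  · rcases Nat.lt_or_ge (i + (n-1)) n with h|h
    · rw [Nat.mod_eq_of_lt h]
      have : i + (n-1) + 1 = n := by omega
      rw [this, Nat.mod_self]; omega
    · rw [mod_sub n _ h (by omega), Nat.mod_eq_of_lt (by omega)]; omega

def CInv (n : ℕ) (S : Set ℕ) (G : SimpleGraph ℕ) (π : ℕ → ℕ) : Prop :=
  (∀ x y, G.Adj x y → (cycleG n).Adj (π x) (π y)) ∧
  ∀ i, i < n → i ∉ S →
    (∀ x, π x = i → x = i) ∧
    (∃ a, G.Adj i a ∧ π a = (i + (n-1)) % n) ∧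
    (∃ b, G.Adj i b ∧ π b = (i + 1) % n)

lemma inv_init (n : ℕ) (hn : 6 ≤ n) (S : Set ℕ) : CInv n S (cycleG n) id := by
  refine ⟨fun x y h => h, fun i hi _ => ⟨fun x h => h, ?_, ?_⟩⟩
  · exact ⟨_, cycle_adj_pred n i hn hi, rfl⟩
  · exact ⟨_, cycle_adj_succ n i hn hi, rfl⟩

lemma inv_step (n : ℕ) (S : Set ℕ) (G H : SimpleGraph ℕ) (π : ℕ → ℕ) (v v' : ℕ)
    (hInv : CInv n S G π) (hsp : IsSplitAt v v' G H) (hv : v ∈ S) :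
    ∃ π', CInv n S H π' := by
  obtain ⟨hne, hiso, hnadj, hkeep, hsplit⟩ := hsp
  have hiso' : ∀ x, ¬ G.Adj v' x := by
    intro x hx
    have : x ∈ G.neighborSet v' := hx
    rw [hiso] at this; exact this
  have key : ∀ x y, H.Adj x y → G.Adj (if x = v' then v else x) (if y = v' then v else y) := by
    intro x y hxy
    by_cases hx' : x = v'
    · rw [hx'] at hxy
      by_cases hy' : y = v'
      · rw [hy'] at hxy; exact absurd hxy (H.loopless.irrefl _)
      · by_cases hyv : y = v
        · rw [hyv] at hxy; exact absurd hxy.symm hnadj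
        · have h := (hsplit y hyv hy').mp (Or.inr hxy)
          simp only [if_pos hx', if_neg hy']
          exact h
    · by_cases hy' : y = v'
      · rw [hy'] at hxy
        by_cases hxv : x = v
        · rw [hxv] at hxy; exact absurd hxy hnadj
        · have h := (hsplit x hxv hx').mp (Or.inr hxy.symm)
          simp only [if_neg hx', if_pos hy']
          exact h.symm
      · simp only [if_neg hx', if_neg hy']
        by_cases hxv : x = v
        · rw [hxv] at hxy ⊢
          by_cases hyv : y = v
          · rw [hyv] at hxy; exact absurd hxy (H.loopless.irrefl _)
          · exact (hsplit y hyv hy').mp (Or.inl hxy)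
        · by_cases hyv : y = v
          · rw [hyv] at hxy ⊢
            exact ((hsplit x hxv hx').mp (Or.inl hxy.symm)).symm
          · exact (hkeep x y hxv hx' hyv hy').mp hxy
  refine ⟨fun x => π (if x = v' then v else x), ?_, ?_⟩
  · intro x y hxy
    exact hInv.1 _ _ (key x y hxy)
  · intro i hi hiS
    obtain ⟨hfib, ⟨a, ha, hpa⟩, ⟨b, hb, hpb⟩⟩ := hInv.2 i hi hiS
    have hiv : i ≠ v := fun h => hiS (h ▸ hv)
    have hiv' : i ≠ v' := fun h => hiso' a (h ▸ ha)
    refine ⟨?_, ?_, ?_⟩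
    · intro x hx
      by_cases hx' : x = v'
      · simp only [hx', if_pos rfl] at hx
        exact absurd (hfib v hx) (Ne.symm hiv)
      · simp only [if_neg hx'] at hx
        exact hfib x hx
    · by_cases hav : a = v
      · rw [hav] at ha hpa
        rcases (hsplit i hiv hiv').mpr ha.symm with h | h
        · exact ⟨v, h.symm, by simp only [if_neg hne, if_neg (id hne)]; exact hpa⟩
        · exact ⟨v', h.symm, by simp only [if_pos rfl]; exact hpa⟩
      · have hav' : a ≠ v' := fun h => hiso' i (h ▸ ha.symm)
        exact ⟨a, (hkeep i a hiv hiv' hav hav').mpr ha, by simp only [if_neg hav']; exact hpa⟩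
    · by_cases hbv : b = v
      · rw [hbv] at hb hpb
        rcases (hsplit i hiv hiv').mpr hb.symm with h | h
        · exact ⟨v, h.symm, by simp only [if_neg hne, if_neg (id hne)]; exact hpb⟩
        · exact ⟨v', h.symm, by simp only [if_pos rfl]; exact hpb⟩
      · have hbv' : b ≠ v' := fun h => hiso' i (h ▸ hb.symm)
        exact ⟨b, (hkeep i b hiv hiv' hbv hbv').mpr hb, by simp only [if_neg hbv']; exact hpb⟩

lemma inv_ops (n : ℕ) (S : Set ℕ) :
    ∀ (l : List Op) (G H : SimpleGraph ℕ) (π : ℕ → ℕ),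
      (∀ o ∈ l, IsSplitOp o) → splitVerts l ⊆ S → OpsApply l G H → CInv n S G π →
      ∃ π', CInv n S H π' := by
  intro l
  induction l with
  | nil => intro G H π _ _ happ hInv; exact happ ▸ ⟨π, hInv⟩
  | cons o l ih =>
      intro G H π hops hsub happ hInv
      obtain ⟨G', hG', happ'⟩ := happ
      match o with
      | Op.del u v => exact absurd (hops _ (List.mem_cons_self)) (by simp [IsSplitOp])
      | Op.split v v' =>
          have hv : v ∈ S := hsub ⟨v', List.mem_cons_self⟩
          obtain ⟨π'', hInv''⟩ := inv_step n S G G' π v v' hInv hG' hv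
          exact ih G' H π'' (fun o ho => hops o (List.mem_cons_of_mem _ ho))
            (fun w ⟨w', hw⟩ => hsub ⟨w', List.mem_cons_of_mem _ hw⟩) happ' hInv''

lemma short_walk {V : Type*} {G : SimpleGraph V} {x y : V} (p : G.Walk x y) (h : p.length ≤ 2) :
    x = y ∨ G.Adj x y ∨ ∃ m, G.Adj x m ∧ G.Adj m y := by
  match p with
  | .nil => exact Or.inl rfl
  | .cons h1 .nil => exact Or.inr (Or.inl h1)
  | .cons h1 (.cons h2 .nil) => exact Or.inr (Or.inr ⟨_, h1, h2⟩)
  | .cons _ (.cons _ (.cons _ _)) => simp [SimpleGraph.Walk.length_cons] at h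

lemma pair_lemma (n : ℕ) (hn : 6 ≤ n) (S : Set ℕ) (H : SimpleGraph ℕ) (π : ℕ → ℕ)
    (hInv : CInv n S H π) (h2 : Is2ClubGraph H) :
    ∀ i < n, i ∈ S ∨ (i+1)%n ∈ S := by
  intro i hi
  by_contra hcon
  push_neg at hcon
  obtain ⟨hiS, hjS⟩ := hcon
  set j := (i+1)%n with hj_def
  have hj : j < n := Nat.mod_lt _ (by omega)
  obtain ⟨hfi, ⟨a, ha, hpa⟩, ⟨b, hb, hpb⟩⟩ := hInv.2 i hi hiS
  obtain ⟨hfj, _, ⟨c, hc2, hpc⟩⟩ := hInv.2 j hj hjS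
  have hbj : b = j := hfj b hpb
  rw [hbj] at hb
  have hr : H.Reachable a c := ha.symm.reachable.trans (hb.reachable.trans hc2.reachable)
  have hd := h2 a c hr
  obtain ⟨p, hp⟩ := hr.exists_walk_length_eq_dist
  have hsw := short_walk p (by omega)
  haveI : NeZero n := ⟨by omega⟩
  have hn1 : ((n - 1 : ℕ) : ZMod n) = -1 := by
    have h : ((n - 1 : ℕ) : ZMod n) + ((1:ℕ) : ZMod n) = ((n:ℕ) : ZMod n) := by
      rw [← Nat.cast_add]; congr 1; omega
    rw [ZMod.natCast_self, Nat.cast_one] at h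
    linear_combination h
  have hπa : ((π a : ℕ) : ZMod n) = (i : ZMod n) - 1 := by
    rw [hpa, ZMod.natCast_mod, Nat.cast_add, hn1]; ring
  have hπc : ((π c : ℕ) : ZMod n) = (i : ZMod n) + 2 := by
    rw [hpc, ZMod.natCast_mod, Nat.cast_add, hj_def, ZMod.natCast_mod]
    push_cast; ring
  have hk : ∃ k : ℕ, 0 < k ∧ k ≤ 5 ∧ ((k : ℕ) : ZMod n) = 0 := by
    rcases hsw with rfl | hadj | ⟨m, h1, h2'⟩
    · refine ⟨3, by norm_num, by norm_num, ?_⟩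
      have e : (i : ZMod n) - 1 = (i : ZMod n) + 2 := by rw [← hπa, ← hπc]
      push_cast
      linear_combination -e
    · rcases cycle_adj_cast (hInv.1 a c hadj) with h | h
      · rw [hπa, hπc] at h
        exact ⟨2, by norm_num, by norm_num, by push_cast; linear_combination h⟩
      · rw [hπa, hπc] at h
        exact ⟨4, by norm_num, by norm_num, by push_cast; linear_combination -h⟩
    · have e1 := cycle_adj_cast (hInv.1 a m h1)
      have e2 := cycle_adj_cast (hInv.1 m c h2')
      rw [hπa] at e1
      rw [hπc] at e2
      rcases e1 with e1 | e1 <;> rcases e2 with e2 | e2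
      · exact ⟨1, by norm_num, by norm_num, by push_cast; linear_combination e1 + e2⟩
      · exact ⟨3, by norm_num, by norm_num, by push_cast; linear_combination e1 - e2⟩
      · exact ⟨3, by norm_num, by norm_num, by push_cast; linear_combination e2 - e1⟩
      · exact ⟨5, by norm_num, by norm_num, by push_cast; linear_combination -e1 - e2⟩
  obtain ⟨k, hk0, hk5, hkz⟩ := hk
  rw [ZMod.natCast_eq_zero_iff] at hkz
  have := Nat.le_of_dvd hk0 hkz
  omega

lemma count_lemma (n : ℕ) (hn : 6 ≤ n) (S : Set ℕ)
    (h : ∀ i < n, i ∈ S ∨ (i+1)%n ∈ S) :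
    (n + 1) / 2 ≤ (S ∩ {i | i < n}).ncard := by
  classical
  set F : Finset ℕ := (Finset.range n).filter (· ∈ S) with hF
  set T : Finset ℕ := (Finset.range n).filter (· ∉ S) with hT
  have hset : S ∩ {i | i < n} = ↑F := by
    ext x; simp [hF, and_comm]
  rw [hset, Set.ncard_coe_finset]
  have hsum : F.card + T.card = n := by
    rw [hF, hT]
    rw [Finset.card_filter_add_card_filter_not]
    exact Finset.card_range n
  -- membership facts
  have hTmem : ∀ i ∈ T, i < n ∧ i ∉ S := by
    intro i hi; rw [hT] at hi; simp at hi; exact hi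
  have hTsucc : ∀ i ∈ T, (i+1)%n ∈ S := by
    intro i hi
    obtain ⟨h1, h2⟩ := hTmem i hi
    rcases h i h1 with h' | h'
    · exact absurd h' h2
    · exact h'
  have hTpair : ∀ i, i ∈ T → i + 1 ∈ T → False := by
    intro i hi hi1
    obtain ⟨h1, h2⟩ := hTmem _ hi1
    have := hTsucc i hi
    rw [Nat.mod_eq_of_lt h1] at this
    exact h2 this
  have hcard : T.card ≤ n / 2 := by
    by_cases h0 : 0 ∈ T
    · -- n-1 ∉ T and 1 ∉ T
      have h1T : 1 ∉ T := fun h1 => hTpair 0 h0 h1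
      have hnT : n - 1 ∉ T := by
        intro hn1
        have := hTsucc _ hn1
        have he : (n - 1 + 1) % n = 0 := by
          have : n - 1 + 1 = n := by omega
          rw [this, Nat.mod_self]
        rw [he] at this
        exact (hTmem 0 h0).2 this
      have hsub : T.erase 0 ⊆ Finset.Ico 2 (n-1) := by
        intro x hx
        have hx0 : x ≠ 0 := Finset.ne_of_mem_erase hx
        have hxT : x ∈ T := Finset.mem_of_mem_erase hx
        have hx1 : x ≠ 1 := fun h => h1T (h ▸ hxT)
        have hxn : x ≠ n - 1 := fun h => hnT (h ▸ hxT)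
        have := (hTmem x hxT).1
        rw [Finset.mem_Ico]; omega
      have hinj : ∀ x ∈ T.erase 0, ∀ y ∈ T.erase 0, (x-2)/2 = (y-2)/2 → x = y := by
        intro x hx y hy hxy
        by_contra hne
        have hx' := Finset.mem_Ico.mp (hsub hx)
        have hy' := Finset.mem_Ico.mp (hsub hy)
        have : y = x + 1 ∨ x = y + 1 := by omega
        rcases this with h' | h'
        · exact hTpair x (Finset.mem_of_mem_erase hx) (h' ▸ Finset.mem_of_mem_erase hy)
        · exact hTpair y (Finset.mem_of_mem_erase hy) (h' ▸ Finset.mem_of_mem_erase hx)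
      have hle : (T.erase 0).card ≤ (n-2)/2 := by
        have h2 : (T.erase 0).card ≤ (Finset.range ((n-2)/2)).card :=
          Finset.card_le_card_of_injOn (fun x => (x-2)/2)
            (fun x hx => by
              have := Finset.mem_Ico.mp (hsub hx)
              show (x-2)/2 ∈ Finset.range ((n-2)/2)
              rw [Finset.mem_range]; omega)
            (fun x hx y hy hxy => hinj x hx y hy hxy)
        rwa [Finset.card_range] at h2
      have := Finset.card_erase_add_one h0
      omega
    · have hsub : T ⊆ Finset.Ico 1 n := by
        intro x hx
        have hx0 : x ≠ 0 := fun h => h0 (h ▸ hx)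
        have := (hTmem x hx).1
        rw [Finset.mem_Ico]; omega
      have hinj : ∀ x ∈ T, ∀ y ∈ T, (x-1)/2 = (y-1)/2 → x = y := by
        intro x hx y hy hxy
        by_contra hne
        have hx' := Finset.mem_Ico.mp (hsub hx)
        have hy' := Finset.mem_Ico.mp (hsub hy)
        have : y = x + 1 ∨ x = y + 1 := by omega
        rcases this with h' | h'
        · exact hTpair x hx (h' ▸ hy)
        · exact hTpair y hy (h' ▸ hx)
      have h2 : T.card ≤ (Finset.range (n/2)).card :=
        Finset.card_le_card_of_injOn (fun x => (x-1)/2)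
          (fun x hx => by
            have := Finset.mem_Ico.mp (hsub hx)
            show (x-1)/2 ∈ Finset.range (n/2)
            rw [Finset.mem_range]; omega)
          (fun x hx y hy hxy => hinj x hx y hy hxy)
      rw [Finset.card_range] at h2
      omega
  omega

theorem stmt10 (n : ℕ) (hn : 6 ≤ n) (l : List Op) (H : SimpleGraph ℕ)
    (hops : ∀ o ∈ l, IsSplitOp o) (happ : OpsApply l (cycleG n) H)
    (h2 : Is2ClubGraph H) :
    (n + 1) / 2 ≤ Set.ncard (splitVerts l ∩ {i | i < n}) := by
  obtain ⟨π, hInv⟩ := inv_ops n (splitVerts l) l (cycleG n) H id hops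
    (fun x hx => hx) happ (inv_init n hn _)
  exact count_lemma n hn (splitVerts l) (pair_lemma n hn _ H π hInv h2)
end
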